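/- arXiv:2107.00535 — 9 statements merged into one kernel-verified Lean document; each statement's English description precedes it below -/
import Mathlib

section
/- Let U be binomially distributed with parameters n and p, where n ≥ 1, 0 < p < 1 and n p ≥ 2, and let S = (U − n p)/√(n p). Then E[|S|³] ≤ 3. -/
open Finset

lemma cast_desc (j k : ℕ) :
    (k.descFactorial j : ℝ) = ∏ i ∈ range j, ((k : ℝ) - i) := by
  induction j with
  | zero => simp
  | succ j ih =>
    rw [Nat.descFactorial_succ, prod_range_succ, ← ih]
    rcases le_or_gt j k with h | h
    · push_cast [h]; ring
    · rw [Nat.descFactorial_eq_zero_iff_lt.2 h]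
      rw [show k.descFactorial j = 0 from Nat.descFactorial_eq_zero_iff_lt.2 h] at *
      simp

lemma desc_choose (n j k : ℕ) (hjk : j ≤ k) (hkn : k ≤ n) :
    k.descFactorial j * n.choose k = n.descFactorial j * (n - j).choose (k - j) := by
  rw [Nat.descFactorial_eq_factorial_mul_choose, Nat.descFactorial_eq_factorial_mul_choose,
    Nat.mul_assoc, Nat.mul_assoc, Nat.mul_comm (k.choose j), Nat.choose_mul hjk]

lemma fm (n j : ℕ) (x y : ℝ) :
    ∑ k ∈ range (n + 1), (k.descFactorial j : ℝ) * (n.choose k) * x ^ k * y ^ (n - k)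
      = (n.descFactorial j : ℝ) * x ^ j * (x + y) ^ (n - j) := by
  rcases lt_or_ge n j with h | h
  · rw [Nat.descFactorial_eq_zero_iff_lt.2 h]
    rw [Finset.sum_eq_zero (fun k hk => ?_)]
    · simp
    · rw [Nat.descFactorial_eq_zero_iff_lt.2 (lt_of_le_of_lt (mem_range_succ_iff.1 hk) h)]
      simp
  · have h1 : ∑ k ∈ range (n + 1), (k.descFactorial j : ℝ) * (n.choose k) * x ^ k * y ^ (n - k)
        = ∑ k ∈ Ico j (n + 1), (k.descFactorial j : ℝ) * (n.choose k) * x ^ k * y ^ (n - k) := by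
      refine (sum_subset (fun k hk => mem_range.2 (mem_Ico.1 hk).2) (fun k hk hk' => ?_)).symm
      have hkj : k < j := by
        by_contra hc
        exact hk' (mem_Ico.2 ⟨le_of_not_gt hc, mem_range.1 hk⟩)
      rw [Nat.descFactorial_eq_zero_iff_lt.2 hkj]; simp
    have h2 : ∀ k ∈ Ico j (n + 1),
        (k.descFactorial j : ℝ) * (n.choose k) * x ^ k * y ^ (n - k)
        = (n.descFactorial j : ℝ) * (((n - j).choose (k - j) : ℝ) * x ^ k * y ^ (n - k)) := by
      intro k hk
      obtain ⟨hjk, hkn⟩ := mem_Ico.1 hk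
      have := desc_choose n j k hjk (Nat.lt_succ_iff.1 hkn)
      have hc : (k.descFactorial j : ℝ) * (n.choose k)
          = (n.descFactorial j : ℝ) * ((n - j).choose (k - j)) := by
        exact_mod_cast congrArg (Nat.cast (R := ℝ)) this
      calc (k.descFactorial j : ℝ) * (n.choose k) * x ^ k * y ^ (n - k)
          = ((k.descFactorial j : ℝ) * (n.choose k)) * x ^ k * y ^ (n - k) := by ring
        _ = (n.descFactorial j : ℝ) * (((n - j).choose (k - j) : ℝ) * x ^ k * y ^ (n - k)) := by
            rw [hc]; ring
    rw [h1, sum_congr rfl h2, ← mul_sum]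
    have h3 : ∑ k ∈ Ico j (n + 1), ((n - j).choose (k - j) : ℝ) * x ^ k * y ^ (n - k)
        = x ^ j * ∑ m ∈ range (n - j + 1), ((n - j).choose m : ℝ) * x ^ m * y ^ ((n - j) - m) := by
      rw [show n + 1 = j + (n - j + 1) by omega, Finset.sum_Ico_eq_sum_range, mul_sum]
      refine sum_congr (by congr 1; omega) (fun m hm => ?_)
      have hm' : m ≤ n - j := by simpa [Nat.lt_succ_iff] using mem_range.1 hm
      rw [show j + m - j = m by omega, show n - (j + m) = n - j - m by omega, pow_add]
      ring
    rw [h3]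
    have h4 : ∑ m ∈ range (n - j + 1), ((n - j).choose m : ℝ) * x ^ m * y ^ ((n - j) - m)
        = (x + y) ^ (n - j) := by
      rw [add_pow]
      exact sum_congr rfl (fun m _ => by ring)
    rw [h4]; ring

lemma hd0 (k : ℕ) : (k.descFactorial 0 : ℝ) = 1 := by simp
lemma hd1 (k : ℕ) : (k.descFactorial 1 : ℝ) = (k : ℝ) := by
  rw [cast_desc]; simp
lemma hd2 (k : ℕ) : (k.descFactorial 2 : ℝ) = (k : ℝ) * ((k : ℝ) - 1) := by
  rw [cast_desc, Finset.prod_range_succ, Finset.prod_range_succ]; simp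
lemma hd3 (k : ℕ) : (k.descFactorial 3 : ℝ) = (k : ℝ) * ((k : ℝ) - 1) * ((k : ℝ) - 2) := by
  rw [cast_desc, Finset.prod_range_succ, Finset.prod_range_succ, Finset.prod_range_succ]
  simp
lemma hd4 (k : ℕ) :
    (k.descFactorial 4 : ℝ) = (k : ℝ) * ((k : ℝ) - 1) * ((k : ℝ) - 2) * ((k : ℝ) - 3) := by
  rw [cast_desc, Finset.prod_range_succ, Finset.prod_range_succ, Finset.prod_range_succ,
    Finset.prod_range_succ]
  simp

lemma V2 (n : ℕ) (p : ℝ) :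
    ∑ k ∈ range (n + 1), ((k : ℝ) - n * p) ^ 2 * ((n.choose k : ℝ) * p ^ k * (1 - p) ^ (n - k))
      = n * p * (1 - p) := by
  have key : ∀ k ∈ range (n + 1),
      ((k : ℝ) - n * p) ^ 2 * ((n.choose k : ℝ) * p ^ k * (1 - p) ^ (n - k))
      = (k.descFactorial 2 : ℝ) * (n.choose k) * p ^ k * (1 - p) ^ (n - k)
        + (1 - 2 * (n * p)) * ((k.descFactorial 1 : ℝ) * (n.choose k) * p ^ k * (1 - p) ^ (n - k))
        + (n * p) ^ 2 * ((k.descFactorial 0 : ℝ) * (n.choose k) * p ^ k * (1 - p) ^ (n - k)) := by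
    intro k _
    rw [hd0, hd1, hd2]; ring
  rw [sum_congr rfl key, sum_add_distrib, sum_add_distrib, ← mul_sum, ← mul_sum,
    fm, fm, fm, show p + (1 - p) = 1 by ring, one_pow, one_pow, one_pow, hd2, hd1, hd0]
  ring

lemma V4 (n : ℕ) (p : ℝ) :
    ∑ k ∈ range (n + 1), ((k : ℝ) - n * p) ^ 4 * ((n.choose k : ℝ) * p ^ k * (1 - p) ^ (n - k))
      = n * p * (1 - p) * (1 - 6 * p * (1 - p)) + 3 * (n * p * (1 - p)) ^ 2 := by
  set c : ℝ := n * p with hc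
  have key : ∀ k ∈ range (n + 1),
      ((k : ℝ) - c) ^ 4 * ((n.choose k : ℝ) * p ^ k * (1 - p) ^ (n - k))
      = (k.descFactorial 4 : ℝ) * (n.choose k) * p ^ k * (1 - p) ^ (n - k)
        + (6 - 4 * c) * ((k.descFactorial 3 : ℝ) * (n.choose k) * p ^ k * (1 - p) ^ (n - k))
        + (7 - 12 * c + 6 * c ^ 2) * ((k.descFactorial 2 : ℝ) * (n.choose k) * p ^ k * (1 - p) ^ (n - k))
        + (1 - 4 * c + 6 * c ^ 2 - 4 * c ^ 3) * ((k.descFactorial 1 : ℝ) * (n.choose k) * p ^ k * (1 - p) ^ (n - k))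
        + c ^ 4 * ((k.descFactorial 0 : ℝ) * (n.choose k) * p ^ k * (1 - p) ^ (n - k)) := by
    intro k _
    rw [hd0, hd1, hd2, hd3, hd4]; ring
  rw [sum_congr rfl key, sum_add_distrib, sum_add_distrib, sum_add_distrib, sum_add_distrib,
    ← mul_sum, ← mul_sum, ← mul_sum, ← mul_sum,
    fm, fm, fm, fm, fm, show p + (1 - p) = 1 by ring, one_pow, one_pow, one_pow, one_pow, one_pow,
    hd4, hd3, hd2, hd1, hd0, hc]
  ring

lemma S0 (n : ℕ) (p : ℝ) :
    ∑ k ∈ range (n + 1), (n.choose k : ℝ) * p ^ k * (1 - p) ^ (n - k) = 1 := by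
  have := fm n 0 p (1 - p)
  simp only [Nat.descFactorial_zero, Nat.cast_one, one_mul, pow_zero, Nat.sub_zero] at this
  rw [show p + (1 - p) = 1 by ring, one_pow] at this
  exact this

lemma abs_cube_le (x : ℝ) : |x| ^ 3 ≤ x ^ 2 + x ^ 4 / 4 := by
  have h1 : x ^ 2 * |x| = |x| ^ 3 := by rw [← sq_abs]; ring
  nlinarith [sq_nonneg (x ^ 2 - 2 * |x|), sq_abs x, abs_nonneg x]

lemma finalsum (n : ℕ) (p : ℝ) (hp : 0 < p) (hp1 : p < 1) (hnp : (2 : ℝ) ≤ n * p) :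
    ∑ k ∈ range (n + 1), |((k : ℝ) - n * p) / Real.sqrt (n * p)| ^ 3
        * ((n.choose k : ℝ) * p ^ k * (1 - p) ^ (n - k)) ≤ 3 := by
  have hc : (0 : ℝ) < n * p := lt_of_lt_of_le two_pos hnp
  have hs : Real.sqrt (n * p) ^ 2 = n * p := Real.sq_sqrt hc.le
  have hs4 : Real.sqrt (n * p) ^ 4 = (n * p) ^ 2 := by
    rw [show (4 : ℕ) = 2 * 2 from rfl, pow_mul, hs]
  have step : ∀ k ∈ range (n + 1),
      |((k : ℝ) - n * p) / Real.sqrt (n * p)| ^ 3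
        * ((n.choose k : ℝ) * p ^ k * (1 - p) ^ (n - k))
      ≤ (1 / (n * p)) * (((k : ℝ) - n * p) ^ 2 * ((n.choose k : ℝ) * p ^ k * (1 - p) ^ (n - k)))
        + (1 / (4 * (n * p) ^ 2)) * (((k : ℝ) - n * p) ^ 4 * ((n.choose k : ℝ) * p ^ k * (1 - p) ^ (n - k))) := by
    intro k _
    have hP : (0 : ℝ) ≤ (n.choose k : ℝ) * p ^ k * (1 - p) ^ (n - k) :=
      mul_nonneg (mul_nonneg (Nat.cast_nonneg _) (pow_nonneg hp.le _))
        (pow_nonneg (by linarith) _)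
    have hb := abs_cube_le (((k : ℝ) - n * p) / Real.sqrt (n * p))
    calc |((k : ℝ) - n * p) / Real.sqrt (n * p)| ^ 3
          * ((n.choose k : ℝ) * p ^ k * (1 - p) ^ (n - k))
        ≤ ((((k : ℝ) - n * p) / Real.sqrt (n * p)) ^ 2
            + (((k : ℝ) - n * p) / Real.sqrt (n * p)) ^ 4 / 4)
          * ((n.choose k : ℝ) * p ^ k * (1 - p) ^ (n - k)) :=
        mul_le_mul_of_nonneg_right hb hP
      _ = (1 / (n * p)) * (((k : ℝ) - n * p) ^ 2 * ((n.choose k : ℝ) * p ^ k * (1 - p) ^ (n - k)))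
        + (1 / (4 * (n * p) ^ 2)) * (((k : ℝ) - n * p) ^ 4 * ((n.choose k : ℝ) * p ^ k * (1 - p) ^ (n - k))) := by
          rw [div_pow, div_pow, hs, hs4]
          field_simp
  calc ∑ k ∈ range (n + 1), |((k : ℝ) - n * p) / Real.sqrt (n * p)| ^ 3
        * ((n.choose k : ℝ) * p ^ k * (1 - p) ^ (n - k))
      ≤ ∑ k ∈ range (n + 1),
        ((1 / (n * p)) * (((k : ℝ) - n * p) ^ 2 * ((n.choose k : ℝ) * p ^ k * (1 - p) ^ (n - k)))
        + (1 / (4 * (n * p) ^ 2)) * (((k : ℝ) - n * p) ^ 4 * ((n.choose k : ℝ) * p ^ k * (1 - p) ^ (n - k)))) :=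
      sum_le_sum step
    _ = (1 / (n * p)) * (n * p * (1 - p))
        + (1 / (4 * (n * p) ^ 2)) * (n * p * (1 - p) * (1 - 6 * p * (1 - p)) + 3 * (n * p * (1 - p)) ^ 2) := by
      rw [sum_add_distrib, ← mul_sum, ← mul_sum, V2, V4]
    _ ≤ 3 := by
      set c : ℝ := n * p with hcdef
      have h1 : (1 / c) * (c * (1 - p)) = 1 - p := by field_simp
      have hX : c * (1 - p) * (1 - 6 * p * (1 - p)) + 3 * (c * (1 - p)) ^ 2 ≤ c + 3 * c ^ 2 := by
        nlinarith [mul_nonneg hc.le hp.le,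
          mul_nonneg (mul_nonneg hc.le hp.le) (sq_nonneg (1 - p)),
          mul_nonneg (mul_nonneg (sq_nonneg c) hp.le) (show (0:ℝ) ≤ 2 - p by linarith)]
      have h2 : (1 / (4 * c ^ 2)) * (c * (1 - p) * (1 - 6 * p * (1 - p)) + 3 * (c * (1 - p)) ^ 2)
          ≤ (1 / (4 * c ^ 2)) * (c + 3 * c ^ 2) :=
        mul_le_mul_of_nonneg_left hX (by positivity)
      have h3 : (1 / (4 * c ^ 2)) * (c + 3 * c ^ 2) = 1 / (4 * c) + 3 / 4 := by
        field_simp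
      have h4 : (1 : ℝ) / (4 * c) ≤ 1 / 8 := by
        rw [div_le_div_iff₀ (by linarith) (by norm_num)]; linarith
      linarith [h1, h2, h3.le, h4, hp.le, hp1.le]

theorem stmt9
    {Ω : Type*} [MeasurableSpace Ω] (μ : MeasureTheory.Measure Ω)
    [MeasureTheory.IsProbabilityMeasure μ]
    (n : ℕ) (hn : 1 ≤ n) (p : ℝ) (hp : 0 < p) (hp1 : p < 1)
    (U : Ω → ℕ) (hUm : Measurable U)
    (hU : ∀ k : ℕ, μ {ω | U ω = k}
      = ENNReal.ofReal ((n.choose k : ℝ) * p ^ k * (1 - p) ^ (n - k)))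
    (hnp : (2 : ℝ) ≤ n * p) :
    (∫ ω, |((U ω : ℝ) - n * p) / Real.sqrt (n * p)| ^ 3 ∂μ) ≤ 3 := by
  set f : ℕ → ℝ := fun k => |((k : ℝ) - n * p) / Real.sqrt (n * p)| ^ 3 with hf
  set g : Ω → ℝ := fun ω =>
    ∑ k ∈ range (n + 1), ({ω | U ω = k}).indicator (fun _ => f k) ω with hg
  have hmeas : ∀ k : ℕ, MeasurableSet {ω | U ω = k} := fun k =>
    hUm (measurableSet_singleton k)
  -- the set where U > n is null
  have hnull : μ {ω | n < U ω} = 0 := by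
    have hsub : {ω | n < U ω} ⊆ ⋃ k : ℕ, {ω | U ω = n + 1 + k} := by
      intro ω hω
      simp only [Set.mem_setOf_eq] at hω
      exact Set.mem_iUnion.2 ⟨U ω - (n + 1), by simp only [Set.mem_setOf_eq]; omega⟩
    refine le_antisymm (le_trans (MeasureTheory.measure_mono hsub) ?_) (zero_le)
    rw [MeasureTheory.measure_iUnion_null fun k => ?_]
    rw [hU, Nat.choose_eq_zero_of_lt (by omega)]
    simp
  -- a.e. equality
  have hae : (fun ω => f (U ω)) =ᵐ[μ] g := by
    rw [Filter.EventuallyEq, MeasureTheory.ae_iff]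
    refine MeasureTheory.measure_mono_null (fun ω hω => ?_) hnull
    simp only [Set.mem_setOf_eq] at hω ⊢
    by_contra hc
    push_neg at hc
    apply hω
    rw [hg]
    simp only [Set.indicator_apply, Set.mem_setOf_eq]
    rw [Finset.sum_ite_eq (range (n + 1)) (U ω) f, if_pos (mem_range_succ_iff.2 hc)]
  have hint : ∀ k : ℕ, MeasureTheory.Integrable (({ω | U ω = k}).indicator (fun _ => f k)) μ := by
    intro k
    rw [MeasureTheory.integrable_indicator_iff (hmeas k)]
    exact MeasureTheory.integrableOn_const (MeasureTheory.measure_lt_top μ _).ne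
  have hgint : ∫ ω, g ω ∂μ
      = ∑ k ∈ range (n + 1), f k * ((n.choose k : ℝ) * p ^ k * (1 - p) ^ (n - k)) := by
    rw [hg, MeasureTheory.integral_finset_sum _ (fun k _ => hint k)]
    refine sum_congr rfl (fun k _ => ?_)
    rw [MeasureTheory.integral_indicator_const (f k) (hmeas k), MeasureTheory.measureReal_def, hU k, smul_eq_mul,
      ENNReal.toReal_ofReal (mul_nonneg (mul_nonneg (Nat.cast_nonneg _) (pow_nonneg hp.le _))
        (pow_nonneg (by linarith) _))]
    ring
  calc (∫ ω, |((U ω : ℝ) - n * p) / Real.sqrt (n * p)| ^ 3 ∂μ)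
      = ∫ ω, g ω ∂μ := MeasureTheory.integral_congr_ae hae
    _ = ∑ k ∈ range (n + 1), f k * ((n.choose k : ℝ) * p ^ k * (1 - p) ^ (n - k)) := hgint
    _ ≤ 3 := finalsum n p hp hp1 hnp
end

section
/- Let U be binomially distributed with parameters n and p, where n ≥ 1, 0 < p < 1 and n p ≥ 2, and let S = (U − n p)/√(n p). Then E[S⁶] ≤ 28. -/
open Finset MeasureTheory

lemma castD' : ∀ (j k : ℕ), (k.descFactorial j : ℝ) = ∏ i ∈ range j, ((k:ℝ) - i) := by
  intro j
  induction j with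
  | zero => simp
  | succ j ih =>
    intro k
    rw [Nat.descFactorial_succ, prod_range_succ]
    rcases le_or_gt j k with h | h
    · rw [Nat.cast_mul, Nat.cast_sub h, ih]; ring
    · have hz : (∏ i ∈ range j, ((k:ℝ) - i)) = 0 :=
        Finset.prod_eq_zero (mem_range.2 h) (by ring)
      rw [Nat.sub_eq_zero_of_le h.le, Nat.zero_mul, Nat.cast_zero, hz, zero_mul]

lemma binomSum' (N : ℕ) (p : ℝ) :
    ∑ k ∈ range (N+1), (N.choose k : ℝ) * p ^ k * (1-p) ^ (N-k) = 1 := by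
  have h := add_pow p (1-p) N
  simp only [add_sub_cancel, one_pow] at h
  calc ∑ k ∈ range (N+1), (N.choose k : ℝ) * p ^ k * (1-p) ^ (N-k)
      = ∑ k ∈ range (N+1), p ^ k * (1-p) ^ (N-k) * (N.choose k : ℝ) :=
        Finset.sum_congr rfl fun k _ => by ring
    _ = 1 := h.symm

lemma natid' {n j m : ℕ} (h : j + m ≤ n) :
    n.choose (j+m) * (j+m).descFactorial j = n.descFactorial j * (n-j).choose m := by
  rw [Nat.descFactorial_eq_factorial_mul_choose, Nat.descFactorial_eq_factorial_mul_choose,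
    ← Nat.mul_assoc, Nat.mul_comm (n.choose (j+m)) (Nat.factorial j), Nat.mul_assoc,
    Nat.choose_mul (Nat.le_add_right j m), Nat.add_sub_cancel_left, Nat.mul_assoc]

lemma factMom' (n j : ℕ) (p : ℝ) :
    ∑ k ∈ range (n+1), (n.choose k : ℝ) * p ^ k * (1-p) ^ (n-k) * (k.descFactorial j : ℝ)
      = (n.descFactorial j : ℝ) * p ^ j := by
  have h1 : ∑ k ∈ range (n+1), (n.choose k : ℝ) * p ^ k * (1-p) ^ (n-k) * (k.descFactorial j : ℝ)
      = ∑ k ∈ Ico j (n+1), (n.choose k : ℝ) * p ^ k * (1-p) ^ (n-k) * (k.descFactorial j : ℝ) := by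
    refine (Finset.sum_subset ?_ ?_).symm
    · intro x hx; exact mem_range.2 (mem_Ico.1 hx).2
    · intro x hx hx'
      have : x < j := by
        rcases lt_or_ge x j with h | h
        · exact h
        · exact absurd (mem_Ico.2 ⟨h, mem_range.1 hx⟩) hx'
      rw [Nat.descFactorial_eq_zero_iff_lt.2 this, Nat.cast_zero, mul_zero]
  rw [h1, Finset.sum_Ico_eq_sum_range]
  rcases le_or_gt j n with hjn | hjn
  · have h2 : ∀ m ∈ range (n + 1 - j),
        (n.choose (j+m) : ℝ) * p ^ (j+m) * (1-p) ^ (n-(j+m)) * ((j+m).descFactorial j : ℝ)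
        = (n.descFactorial j : ℝ) * p ^ j *
          (((n-j).choose m : ℝ) * p ^ m * (1-p) ^ ((n-j)-m)) := by
      intro m hm
      have hmn : j + m ≤ n := by
        have := mem_range.1 hm; omega
      have hcast : (n.choose (j+m) : ℝ) * ((j+m).descFactorial j : ℝ)
          = (n.descFactorial j : ℝ) * ((n-j).choose m : ℝ) := by
        rw [← Nat.cast_mul, ← Nat.cast_mul, natid' hmn]
      have hsub : n - (j+m) = (n-j) - m := by omega
      rw [hsub, pow_add]
      calc (n.choose (j+m) : ℝ) * (p ^ j * p ^ m) * (1-p) ^ ((n-j)-m) * ((j+m).descFactorial j : ℝ)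
          = ((n.choose (j+m) : ℝ) * ((j+m).descFactorial j : ℝ)) * (p ^ j * p ^ m * (1-p) ^ ((n-j)-m)) := by ring
        _ = ((n.descFactorial j : ℝ) * ((n-j).choose m : ℝ)) * (p ^ j * p ^ m * (1-p) ^ ((n-j)-m)) := by rw [hcast]
        _ = (n.descFactorial j : ℝ) * p ^ j * (((n-j).choose m : ℝ) * p ^ m * (1-p) ^ ((n-j)-m)) := by ring
    rw [Finset.sum_congr rfl h2, ← Finset.mul_sum]
    have : n + 1 - j = (n - j) + 1 := by omega
    rw [this, binomSum' (n-j) p, mul_one]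
  · have h0 : n + 1 - j = 0 := by omega
    rw [h0, Finset.range_zero, Finset.sum_empty,
      Nat.descFactorial_eq_zero_iff_lt.2 hjn, Nat.cast_zero, zero_mul]

lemma sixthMoment' (n : ℕ) (p x : ℝ) :
    ∑ k ∈ range (n+1), (n.choose k : ℝ) * p ^ k * (1-p) ^ (n-k) * ((k:ℝ) - x)^6
    = x^6
      + (1 - 6*x + 15*x^2 - 20*x^3 + 15*x^4 - 6*x^5) * ((n.descFactorial 1 : ℝ) * p^1)
      + (31 - 90*x + 105*x^2 - 60*x^3 + 15*x^4) * ((n.descFactorial 2 : ℝ) * p^2)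
      + (90 - 150*x + 90*x^2 - 20*x^3) * ((n.descFactorial 3 : ℝ) * p^3)
      + (65 - 60*x + 15*x^2) * ((n.descFactorial 4 : ℝ) * p^4)
      + (15 - 6*x) * ((n.descFactorial 5 : ℝ) * p^5)
      + 1 * ((n.descFactorial 6 : ℝ) * p^6) := by
  have key : ∀ k : ℕ, (n.choose k : ℝ) * p ^ k * (1-p) ^ (n-k) * ((k:ℝ) - x)^6
      = ((n.choose k : ℝ) * p ^ k * (1-p) ^ (n-k)) * x^6
      + (1 - 6*x + 15*x^2 - 20*x^3 + 15*x^4 - 6*x^5) *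
          ((n.choose k : ℝ) * p ^ k * (1-p) ^ (n-k) * (k.descFactorial 1 : ℝ))
      + (31 - 90*x + 105*x^2 - 60*x^3 + 15*x^4) *
          ((n.choose k : ℝ) * p ^ k * (1-p) ^ (n-k) * (k.descFactorial 2 : ℝ))
      + (90 - 150*x + 90*x^2 - 20*x^3) *
          ((n.choose k : ℝ) * p ^ k * (1-p) ^ (n-k) * (k.descFactorial 3 : ℝ))
      + (65 - 60*x + 15*x^2) *
          ((n.choose k : ℝ) * p ^ k * (1-p) ^ (n-k) * (k.descFactorial 4 : ℝ))
      + (15 - 6*x) *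
          ((n.choose k : ℝ) * p ^ k * (1-p) ^ (n-k) * (k.descFactorial 5 : ℝ))
      + 1 * ((n.choose k : ℝ) * p ^ k * (1-p) ^ (n-k) * (k.descFactorial 6 : ℝ)) := by
    intro k
    simp only [castD', prod_range_succ, prod_range_zero, Nat.cast_ofNat, Nat.cast_zero,
      Nat.cast_one]
    ring
  rw [Finset.sum_congr rfl (fun k _ => key k)]
  simp only [Finset.sum_add_distrib, ← Finset.mul_sum, ← Finset.sum_mul]
  rw [binomSum' n p, factMom' n 1 p, factMom' n 2 p, factMom' n 3 p, factMom' n 4 p,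
    factMom' n 5 p, factMom' n 6 p, one_mul]

lemma Aux1' (p : ℝ) (h0 : 0 ≤ p) (h1 : p ≤ 1) :
    1 - 31*p + 180*p^2 - 390*p^3 + 360*p^4 - 120*p^5 ≤ 1 := by
  nlinarith [sq_nonneg (p - 3/4), sq_nonneg (p^2 - (3/2)*p + 1/2), mul_nonneg h0 h0,
    mul_nonneg (mul_nonneg h0 h0) h0, sq_nonneg (p*(1-p)), sq_nonneg p, sq_nonneg (1-p),
    mul_nonneg h0 (sub_nonneg.2 h1), sq_nonneg (p^2 - p)]

lemma Aux2' (p : ℝ) (h0 : 0 ≤ p) (h1 : p ≤ 1) :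
    25 - 180*p + 415*p^2 - 390*p^3 + 130*p^4 ≤ 25 := by
  nlinarith [mul_nonneg h0 (mul_nonneg (sub_nonneg.2 h1)
    (add_nonneg (mul_nonneg (by norm_num : (0:ℝ) ≤ 130) (sq_nonneg (p-1))) (by norm_num : (0:ℝ) ≤ 25))),
    mul_nonneg h0 (by norm_num : (0:ℝ) ≤ 25)]

lemma realIneq' (N p : ℝ) (h0 : 0 ≤ p) (h1 : p ≤ 1) (h2 : 2 ≤ N*p) :
    N*p * (1 - 31*p + 180*p^2 - 390*p^3 + 360*p^4 - 120*p^5)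
    + (N*p)^2 * (25 - 180*p + 415*p^2 - 390*p^3 + 130*p^4)
    + (N*p)^3 * (15*(1-p)^3) ≤ 28*(N*p)^3 := by
  have hA := Aux1' p h0 h1
  have hB := Aux2' p h0 h1
  have hq : 15*(1-p)^3 ≤ 15 := by nlinarith [sq_nonneg (1-p), sub_nonneg.2 h1]
  have hx0 : (0:ℝ) < N*p := by linarith
  have e1 : N*p * (1 - 31*p + 180*p^2 - 390*p^3 + 360*p^4 - 120*p^5) ≤ N*p :=
    mul_le_of_le_one_right hx0.le hA
  have e2 : (N*p)^2 * (25 - 180*p + 415*p^2 - 390*p^3 + 130*p^4) ≤ (N*p)^2 * 25 :=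
    mul_le_mul_of_nonneg_left hB (sq_nonneg _)
  have e3 : (N*p)^3 * (15*(1-p)^3) ≤ (N*p)^3 * 15 :=
    mul_le_mul_of_nonneg_left hq (pow_nonneg hx0.le 3)
  nlinarith [e1, e2, e3, mul_nonneg (sq_nonneg (N*p)) (by linarith : (0:ℝ) ≤ N*p - 2),
    mul_nonneg hx0.le (by linarith : (0:ℝ) ≤ N*p - 1)]



theorem stmt11
    {Ω : Type*} [MeasurableSpace Ω] (μ : MeasureTheory.Measure Ω)
    [MeasureTheory.IsProbabilityMeasure μ]
    (n : ℕ) (hn : 1 ≤ n) (p : ℝ) (hp : 0 < p) (hp1 : p < 1)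
    (U : Ω → ℕ) (hUm : Measurable U)
    (hU : ∀ k : ℕ, μ {ω | U ω = k}
      = ENNReal.ofReal ((n.choose k : ℝ) * p ^ k * (1 - p) ^ (n - k)))
    (hnp : (2 : ℝ) ≤ n * p) :
    (∫ ω, (((U ω : ℝ) - n * p) / Real.sqrt (n * p)) ^ 6 ∂μ) ≤ 28 := by
  classical
  have hq0 : (0:ℝ) ≤ 1 - p := by linarith
  have hb : ∀ k, 0 ≤ (n.choose k : ℝ) * p ^ k * (1-p) ^ (n-k) := fun k =>
    mul_nonneg (mul_nonneg (Nat.cast_nonneg _) (pow_nonneg hp.le _)) (pow_nonneg hq0 _)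
  have hmeas : ∀ k : ℕ, MeasurableSet {ω | U ω = k} := fun k =>
    hUm (measurableSet_singleton k)
  set f : ℕ → ℝ := fun k => (((k:ℝ) - n * p) / Real.sqrt (n * p)) ^ 6 with hf
  -- the union of level sets has full measure
  have hdisj : (↑(range (n+1)) : Set ℕ).PairwiseDisjoint (fun k => {ω | U ω = k}) := by
    intro i _ j _ hij
    refine Set.disjoint_left.2 fun ω h1 h2 => hij ?_
    exact h1.symm.trans h2
  have hμs : μ (⋃ k ∈ range (n+1), {ω | U ω = k}) = 1 := by
    rw [measure_biUnion_finset hdisj (fun k _ => hmeas k),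
      Finset.sum_congr rfl (fun k _ => hU k),
      ← ENNReal.ofReal_sum_of_nonneg (fun k _ => hb k), binomSum' n p, ENNReal.ofReal_one]
  have hcompl : μ (⋃ k ∈ range (n+1), {ω | U ω = k})ᶜ = 0 := by
    rw [measure_compl (Finset.measurableSet_biUnion _ (fun k _ => hmeas k))
      (measure_ne_top μ _), measure_univ, hμs, tsub_self]
  have hae : (fun ω => f (U ω)) =ᵐ[μ]
      (fun ω => ∑ k ∈ range (n+1), Set.indicator {ω' | U ω' = k} (fun _ => f k) ω) := by
    refine Filter.eventually_of_mem (MeasureTheory.mem_ae_iff.2 hcompl) ?_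
    intro ω hω
    simp only [Set.mem_iUnion] at hω
    obtain ⟨k, hk, hωk⟩ := hω
    have hUk : U ω = k := hωk
    show f (U ω) = ∑ k ∈ range (n+1), Set.indicator {ω' | U ω' = k} (fun _ => f k) ω
    rw [Finset.sum_eq_single_of_mem k hk]
    · rw [Set.indicator_of_mem hωk, hUk]
    · intro j _ hj
      exact Set.indicator_of_notMem (fun h => hj ((show U ω = j from h) ▸ hUk.symm ▸ rfl)) _
  have hint : (∫ ω, f (U ω) ∂μ)
      = ∑ k ∈ range (n+1), ((n.choose k : ℝ) * p ^ k * (1-p) ^ (n-k)) * f k := by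
    rw [integral_congr_ae hae,
      integral_finset_sum _ (fun k _ => (integrable_const (f k)).indicator (hmeas k))]
    refine Finset.sum_congr rfl fun k _ => ?_
    rw [integral_indicator_const _ (hmeas k), measureReal_def, hU k, smul_eq_mul,
      ENNReal.toReal_ofReal (hb k)]
  have hx0 : (0:ℝ) < (n:ℝ) * p := by linarith
  have hsq : (Real.sqrt ((n:ℝ) * p)) ^ 6 = ((n:ℝ) * p) ^ 3 := by
    rw [show (6:ℕ) = 2*3 from rfl, pow_mul, Real.sq_sqrt hx0.le]
  have hfk : ∀ k : ℕ, f k = ((k:ℝ) - n * p) ^ 6 / ((n:ℝ) * p) ^ 3 := by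
    intro k
    rw [hf]
    simp only
    rw [div_pow, hsq]
  have hPos3 : (0:ℝ) < ((n:ℝ) * p) ^ 3 := pow_pos hx0 3
  show (∫ ω, f (U ω) ∂μ) ≤ 28
  rw [hint]
  have hsum : ∑ k ∈ range (n+1), ((n.choose k : ℝ) * p ^ k * (1-p) ^ (n-k)) * f k
      = (∑ k ∈ range (n+1), (n.choose k : ℝ) * p ^ k * (1-p) ^ (n-k) * ((k:ℝ) - (n:ℝ)*p)^6)
        / ((n:ℝ) * p) ^ 3 := by
    rw [Finset.sum_div]
    exact Finset.sum_congr rfl fun k _ => by rw [hfk k]; ring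
  rw [hsum, div_le_iff₀ hPos3, sixthMoment' n p ((n:ℝ)*p)]
  have hfin := realIneq' (n:ℝ) p hp.le hp1.le hnp
  calc ((n:ℝ)*p)^6
      + (1 - 6*((n:ℝ)*p) + 15*((n:ℝ)*p)^2 - 20*((n:ℝ)*p)^3 + 15*((n:ℝ)*p)^4 - 6*((n:ℝ)*p)^5) * ((n.descFactorial 1 : ℝ) * p^1)
      + (31 - 90*((n:ℝ)*p) + 105*((n:ℝ)*p)^2 - 60*((n:ℝ)*p)^3 + 15*((n:ℝ)*p)^4) * ((n.descFactorial 2 : ℝ) * p^2)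
      + (90 - 150*((n:ℝ)*p) + 90*((n:ℝ)*p)^2 - 20*((n:ℝ)*p)^3) * ((n.descFactorial 3 : ℝ) * p^3)
      + (65 - 60*((n:ℝ)*p) + 15*((n:ℝ)*p)^2) * ((n.descFactorial 4 : ℝ) * p^4)
      + (15 - 6*((n:ℝ)*p)) * ((n.descFactorial 5 : ℝ) * p^5)
      + 1 * ((n.descFactorial 6 : ℝ) * p^6)
      = (n:ℝ)*p * (1 - 31*p + 180*p^2 - 390*p^3 + 360*p^4 - 120*p^5)
        + ((n:ℝ)*p)^2 * (25 - 180*p + 415*p^2 - 390*p^3 + 130*p^4)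
        + ((n:ℝ)*p)^3 * (15*(1-p)^3) := by
        simp only [castD', prod_range_succ, prod_range_zero, Nat.cast_ofNat, Nat.cast_zero,
          Nat.cast_one]
        ring
    _ ≤ 28*((n:ℝ)*p)^3 := hfin
    _ = 28 * ((n:ℝ)*p)^3 := by ring
end

section
/- Let U be binomially distributed with parameters n and p, where n ≥ 1 and 0 < p < 1, and let k > 0 be a real number. Then E[U^k] ≤ exp(k²/(2 n p)) · (n p)^k. In particular, if n p ≥ α k² for some α > 0, then E[U^k] ≤ e^{1/(2α)} (n p)^k. -/
open Real Finset MeasureTheory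

lemma stmt12_calcF : ∀ x : ℝ, 0 ≤ x → x ≤ Real.exp (x/2) * Real.log (1+x) := by
  have hd : ∀ x : ℝ, 0 < x → HasDerivAt (fun x : ℝ => Real.exp (x/2) * Real.log (1+x) - x)
      (Real.exp (x/2) * (1/2) * Real.log (1+x) + Real.exp (x/2) * (1/(1+x)) - 1) x := by
    intro x hx0
    have h1x : (0:ℝ) < 1 + x := by linarith
    have he : HasDerivAt (fun x : ℝ => Real.exp (x/2)) (Real.exp (x/2) * (1/2)) x := by
      simpa using ((hasDerivAt_id x).div_const 2).exp
    have hl : HasDerivAt (fun x : ℝ => Real.log (1+x)) (1/(1+x)) x := by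
      simpa using ((hasDerivAt_id x).const_add 1).log h1x.ne'
    exact (he.mul hl).sub (hasDerivAt_id x)
  have hmono : MonotoneOn (fun x : ℝ => Real.exp (x/2) * Real.log (1+x) - x) (Set.Ici 0) := by
    apply monotoneOn_of_deriv_nonneg (convex_Ici 0)
    · apply ContinuousOn.sub _ continuousOn_id
      apply ContinuousOn.mul
      · exact (Real.continuous_exp.comp (continuous_id.div_const 2)).continuousOn
      · apply ContinuousOn.log ((continuous_const.add continuous_id).continuousOn)
        intro x hx
        have hx' : (0:ℝ) ≤ x := hx
        simp only [Pi.add_apply, id]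
        intro h; linarith
    · intro x hx
      rw [interior_Ici] at hx
      exact ((hd x hx).differentiableAt.differentiableWithinAt)
    · intro x hx
      rw [interior_Ici] at hx
      have hx0 : (0:ℝ) < x := hx
      have h1x : (0:ℝ) < 1 + x := by linarith
      rw [(hd x hx0).deriv]
      have hL : x ≤ Real.log (1+x) * (1+x) := by
        have h0 := Real.log_le_sub_one_of_pos (show (0:ℝ) < 1/(1+x) by positivity)
        rw [Real.log_div one_ne_zero h1x.ne', Real.log_one] at h0
        have heq : 1 - 1/(1+x) = x/(1+x) := by field_simp; ring
        have h2 : x/(1+x) ≤ Real.log (1+x) := by linarith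
        calc x = (x/(1+x)) * (1+x) := by field_simp
        _ ≤ Real.log (1+x) * (1+x) := by nlinarith
      have hE : 1 + x/2 ≤ Real.exp (x/2) := by
        have := Real.add_one_le_exp (x/2); linarith
      have hEp : (0:ℝ) < Real.exp (x/2) := Real.exp_pos _
      have key : 1 + x ≤ Real.exp (x/2) * (1/2) * Real.log (1+x) * (1+x) + Real.exp (x/2) := by
        nlinarith [mul_le_mul_of_nonneg_left hL hEp.le, Real.log_nonneg (by linarith : (1:ℝ) ≤ 1+x)]
      have h1 : (1:ℝ) ≤ (Real.exp (x/2) * (1/2) * Real.log (1+x) + Real.exp (x/2) * (1/(1+x))) := by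
        rw [← mul_le_mul_iff_of_pos_right h1x]
        calc (1:ℝ) * (1+x) = 1 + x := by ring
        _ ≤ Real.exp (x/2) * (1/2) * Real.log (1+x) * (1+x) + Real.exp (x/2) := key
        _ = (Real.exp (x/2) * (1/2) * Real.log (1+x) + Real.exp (x/2) * (1/(1+x))) * (1+x) := by
            field_simp
      linarith
  intro x hx
  have := hmono (Set.self_mem_Ici) hx hx
  simp only [Real.log_one, add_zero, mul_zero, sub_zero, zero_div, Real.exp_zero, one_mul] at this
  norm_num at this
  linarith

lemma stmt12_sumBound (n : ℕ) (hn : 1 ≤ n) (p : ℝ) (hp : 0 < p) (hp1 : p < 1)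
    (k : ℝ) (hk : 0 < k) :
    ∑ m ∈ Finset.range (n+1), (m:ℝ)^k * ((n.choose m : ℝ) * p ^ m * (1 - p) ^ (n - m))
      ≤ Real.exp (k ^ 2 / (2 * n * p)) * ((n : ℝ) * p) ^ k := by
  have hn0 : (0:ℝ) < n := by exact_mod_cast hn
  have hnp : (0:ℝ) < n * p := by positivity
  set κ : ℝ := k / (n * p) with hκdef
  have hκ : 0 < κ := by positivity
  set t : ℝ := Real.log (1 + κ) with htdef
  have ht : 0 < t := Real.log_pos (by linarith)
  have hq : (0:ℝ) ≤ 1 - p := by linarith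
  have hterm : ∀ m : ℕ, (m:ℝ)^k ≤ Real.exp ((Real.log k - 1 - Real.log t) * k) * Real.exp (t * m) := by
    intro m
    rcases Nat.eq_zero_or_pos m with hm | hm
    · subst hm
      rw [Nat.cast_zero, Real.zero_rpow hk.ne']
      positivity
    · have hx : (0:ℝ) < m := by exact_mod_cast hm
      have h := Real.log_le_sub_one_of_pos (show (0:ℝ) < t * m / k by positivity)
      have hlogu : Real.log (t * m / k) = Real.log t + Real.log m - Real.log k := by
        rw [Real.log_div (by positivity) hk.ne', Real.log_mul ht.ne' hx.ne']
      have hkey : k * Real.log m ≤ (Real.log k - 1 - Real.log t) * k + t * m := by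
        rw [hlogu] at h
        have h2 := mul_le_mul_of_nonneg_left h hk.le
        have h3 : k * (t * m / k - 1) = t * m - k := by field_simp
        nlinarith
      rw [Real.rpow_def_of_pos hx, ← Real.exp_add]
      exact Real.exp_le_exp.mpr (by linarith)
  set C : ℝ := Real.exp ((Real.log k - 1 - Real.log t) * k) with hC
  have hCpos : 0 < C := Real.exp_pos _
  have hsum1 : ∑ m ∈ Finset.range (n+1), (m:ℝ)^k * ((n.choose m : ℝ) * p ^ m * (1 - p) ^ (n - m))
      ≤ C * (p * Real.exp t + (1 - p)) ^ n := by
    have : (p * Real.exp t + (1 - p)) ^ n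
        = ∑ m ∈ Finset.range (n+1), (p * Real.exp t) ^ m * (1-p) ^ (n-m) * (n.choose m : ℝ) := by
      rw [add_pow]
    rw [this, Finset.mul_sum]
    apply Finset.sum_le_sum
    intro m _
    have hPm : (0:ℝ) ≤ (n.choose m : ℝ) * p ^ m * (1 - p) ^ (n - m) := by positivity
    calc (m:ℝ)^k * ((n.choose m : ℝ) * p ^ m * (1 - p) ^ (n - m))
        ≤ (C * Real.exp (t * m)) * ((n.choose m : ℝ) * p ^ m * (1 - p) ^ (n - m)) :=
          mul_le_mul_of_nonneg_right (hterm m) hPm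
      _ = C * ((p * Real.exp t) ^ m * (1-p) ^ (n-m) * (n.choose m : ℝ)) := by
          rw [mul_pow, ← Real.exp_nat_mul]
          ring_nf
  have het : Real.exp t = 1 + κ := Real.exp_log (by linarith)
  have hmgf : (p * Real.exp t + (1 - p)) ^ n ≤ Real.exp k := by
    have h1 : p * Real.exp t + (1 - p) = 1 + p * κ := by rw [het]; ring
    have h2 : 1 + p * κ ≤ Real.exp (p * κ) := by linarith [Real.add_one_le_exp (p * κ)]
    have h3 : (p * Real.exp t + (1 - p)) ^ n ≤ (Real.exp (p * κ)) ^ n := by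
      rw [h1]; exact pow_le_pow_left₀ (by positivity) h2 n
    have h4 : (Real.exp (p * κ)) ^ n = Real.exp (n * (p * κ)) := (Real.exp_nat_mul _ n).symm
    have h5 : (n:ℝ) * (p * κ) = k := by
      rw [hκdef]; field_simp
    rw [h4, h5] at h3
    exact h3
  have hS : ∑ m ∈ Finset.range (n+1), (m:ℝ)^k * ((n.choose m : ℝ) * p ^ m * (1 - p) ^ (n - m))
      ≤ C * Real.exp k := by
    calc _ ≤ C * (p * Real.exp t + (1 - p)) ^ n := hsum1
      _ ≤ C * Real.exp k := mul_le_mul_of_nonneg_left hmgf hCpos.le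
  have hCk : C * Real.exp k = (k / t) ^ (k:ℝ) := by
    rw [hC, ← Real.exp_add, Real.rpow_def_of_pos (by positivity),
      Real.log_div hk.ne' ht.ne']
    ring_nf
  have hbase : k / t ≤ Real.exp (κ/2) * (n * p) := by
    rw [div_le_iff₀ ht]
    have := stmt12_calcF κ hκ.le
    calc k = κ * (n * p) := by rw [hκdef]; field_simp
      _ ≤ (Real.exp (κ/2) * t) * (n * p) := by
          apply mul_le_mul_of_nonneg_right _ hnp.le
          simpa [htdef] using this
      _ = Real.exp (κ/2) * (n * p) * t := by ring
  have hfinal : (k / t) ^ (k:ℝ) ≤ Real.exp (k ^ 2 / (2 * n * p)) * ((n : ℝ) * p) ^ k := by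
    have h1 : (k / t) ^ (k:ℝ) ≤ (Real.exp (κ/2) * (n * p)) ^ (k:ℝ) :=
      Real.rpow_le_rpow (by positivity) hbase hk.le
    have h2 : (Real.exp (κ/2) * (n * p)) ^ (k:ℝ)
        = Real.exp (k ^ 2 / (2 * n * p)) * ((n : ℝ) * p) ^ k := by
      have he : (Real.exp (κ/2)) ^ (k:ℝ) = Real.exp (k ^ 2 / (2 * n * p)) := by
        rw [Real.rpow_def_of_pos (Real.exp_pos _), Real.log_exp]
        congr 1
        rw [hκdef]; field_simp
      rw [Real.mul_rpow (Real.exp_pos _).le hnp.le, he]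
    calc _ ≤ _ := h1
      _ = _ := h2
  calc _ ≤ C * Real.exp k := hS
    _ = (k / t) ^ (k:ℝ) := hCk
    _ ≤ _ := hfinal

theorem stmt12
    {Ω : Type*} [MeasurableSpace Ω] (μ : MeasureTheory.Measure Ω)
    [MeasureTheory.IsProbabilityMeasure μ]
    (n : ℕ) (hn : 1 ≤ n) (p : ℝ) (hp : 0 < p) (hp1 : p < 1)
    (U : Ω → ℕ) (hUm : Measurable U)
    (hU : ∀ k : ℕ, μ {ω | U ω = k}
      = ENNReal.ofReal ((n.choose k : ℝ) * p ^ k * (1 - p) ^ (n - k)))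
    (k : ℝ) (hk : 0 < k) :
    (∫ ω, (U ω : ℝ) ^ k ∂μ) ≤ Real.exp (k ^ 2 / (2 * n * p)) * ((n : ℝ) * p) ^ k ∧
      (∀ α : ℝ, 0 < α → α * k ^ 2 ≤ n * p →
        (∫ ω, (U ω : ℝ) ^ k ∂μ) ≤ Real.exp (1 / (2 * α)) * ((n : ℝ) * p) ^ k) := by
  have hEq : (∫ ω, (U ω : ℝ) ^ k ∂μ)
      = ∑ m ∈ Finset.range (n+1), (m:ℝ)^k * ((n.choose m : ℝ) * p ^ m * (1 - p) ^ (n - m)) := by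
    have hP : ∀ m : ℕ, 0 ≤ (n.choose m : ℝ) * p ^ m * (1 - p) ^ (n - m) := by
      intro m; have : (0:ℝ) ≤ 1 - p := by linarith
      positivity
    have hmeas : Measurable (fun m : ℕ => ENNReal.ofReal ((m:ℝ)^k)) := measurable_from_top
    rw [MeasureTheory.integral_eq_lintegral_of_nonneg_ae
        (Filter.Eventually.of_forall fun ω => Real.rpow_nonneg (Nat.cast_nonneg _) k)
        ((measurable_from_top (f := fun m : ℕ => ((m:ℝ))^k)).comp hUm).aestronglyMeasurable]
    have h1 : (∫⁻ ω, ENNReal.ofReal ((U ω : ℝ) ^ k) ∂μ)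
        = ∫⁻ m, ENNReal.ofReal ((m:ℝ)^k) ∂(μ.map U) := (MeasureTheory.lintegral_map hmeas hUm).symm
    rw [h1, MeasureTheory.lintegral_countable' (f := fun m : ℕ => ENNReal.ofReal ((m:ℝ)^k)) (μ := μ.map U)]
    have h2 : ∀ m : ℕ, (μ.map U) {m} = ENNReal.ofReal ((n.choose m : ℝ) * p ^ m * (1 - p) ^ (n - m)) := by
      intro m
      rw [MeasureTheory.Measure.map_apply hUm (MeasurableSet.singleton m)]
      exact hU m
    simp only [h2]
    rw [tsum_eq_sum (s := Finset.range (n+1)) ?_]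
    · rw [← ENNReal.toReal_ofReal (Finset.sum_nonneg fun m _ => mul_nonneg (Real.rpow_nonneg (Nat.cast_nonneg _) k) (hP m))]
      congr 1
      rw [ENNReal.ofReal_sum_of_nonneg fun m _ => mul_nonneg (Real.rpow_nonneg (Nat.cast_nonneg _) k) (hP m)]
      exact Finset.sum_congr rfl fun m _ => by
        rw [ENNReal.ofReal_mul (Real.rpow_nonneg (Nat.cast_nonneg _) k)]
    · intro m hm
      have hnm : n < m := by
        by_contra h
        exact hm (Finset.mem_range.mpr (by omega))
      rw [Nat.choose_eq_zero_of_lt hnm]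
      simp
  have hmain : (∫ ω, (U ω : ℝ) ^ k ∂μ) ≤ Real.exp (k ^ 2 / (2 * n * p)) * ((n : ℝ) * p) ^ k := by
    rw [hEq]
    exact stmt12_sumBound n hn p hp hp1 k hk
  refine ⟨hmain, fun α hα hαk => ?_⟩
  have hn0 : (0:ℝ) < n := by exact_mod_cast hn
  have hnp : (0:ℝ) < n * p := by positivity
  have hexp : Real.exp (k ^ 2 / (2 * n * p)) ≤ Real.exp (1 / (2 * α)) := by
    apply Real.exp_le_exp.mpr
    have hk2 : (0:ℝ) < k ^ 2 := by positivity
    have h1 : k ^ 2 / (2 * n * p) ≤ k ^ 2 / (2 * (α * k ^ 2)) := by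
      apply div_le_div_of_nonneg_left hk2.le (by positivity)
      have : 2 * (α * k ^ 2) ≤ 2 * (n * p) := by linarith
      linarith
    have h2 : k ^ 2 / (2 * (α * k ^ 2)) = 1 / (2 * α) := by
      field_simp
    rw [h2] at h1
    linarith
  calc (∫ ω, (U ω : ℝ) ^ k ∂μ) ≤ Real.exp (k ^ 2 / (2 * n * p)) * ((n : ℝ) * p) ^ k := hmain
    _ ≤ Real.exp (1 / (2 * α)) * ((n : ℝ) * p) ^ k :=
      mul_le_mul_of_nonneg_right hexp (Real.rpow_nonneg hnp.le k)
end

section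
/- Let a > 0. Then for all x ≥ 0, |2x log(x/a) − 2(x−a) − (x−a)²/a + (x−a)³/(3a²)| ≤ 2(x−a)⁴/(3a³). -/
open Real Set

/-- ψ(t) = log t - 2(t-1)/(t+1) is monotone on (0,∞). -/
private lemma psi_mono : MonotoneOn (fun t : ℝ => Real.log t - 2*(t-1)/(t+1)) (Ioi 0) := by
  have hasD : ∀ t : ℝ, 0 < t →
      HasDerivAt (fun t : ℝ => Real.log t - 2*(t-1)/(t+1)) (1/t - 4/(t+1)^2) t := by
    intro t ht0
    have ht1 : t + 1 ≠ 0 := by positivity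
    have hl := Real.hasDerivAt_log ht0.ne'
    have hn : HasDerivAt (fun t : ℝ => 2*(t-1)) 2 t := by
      simpa using ((hasDerivAt_id t).sub_const 1).const_mul 2
    have hd : HasDerivAt (fun t : ℝ => t+1) 1 t := by
      simpa using (hasDerivAt_id t).add_const 1
    have h := hl.sub (hn.div hd ht1)
    have h4 : (2*(t+1) - 2*(t-1)*1 : ℝ) = 4 := by ring
    rw [h4] at h
    rw [one_div]
    exact h
  apply monotoneOn_of_deriv_nonneg (convex_Ioi 0)
  · apply ContinuousOn.sub
    · exact Real.continuousOn_log.mono (fun t ht => ne_of_gt ht)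
    · apply ContinuousOn.div
      · fun_prop
      · fun_prop
      · intro t ht
        have ht0 : (0:ℝ) < t := ht
        positivity
  · intro t ht
    rw [interior_Ioi] at ht
    exact (hasD t ht).differentiableAt.differentiableWithinAt
  · intro t ht
    rw [interior_Ioi] at ht
    have ht0 : (0:ℝ) < t := ht
    rw [(hasD t ht0).deriv]
    rw [sub_nonneg, div_le_div_iff₀ (by positivity) ht0]
    nlinarith [sq_nonneg (t-1)]

private lemma log_ge_artanh {t : ℝ} (ht : 1 ≤ t) : 2*(t-1)/(t+1) ≤ Real.log t := by
  have h := psi_mono (show (1:ℝ) ∈ Ioi 0 by norm_num)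
    (show t ∈ Ioi 0 from lt_of_lt_of_le one_pos ht) ht
  simp only [Real.log_one] at h
  norm_num at h
  linarith

private lemma log_le_artanh {t : ℝ} (h0 : 0 < t) (ht : t ≤ 1) :
    Real.log t ≤ 2*(t-1)/(t+1) := by
  have h := psi_mono (show t ∈ Ioi 0 from h0) (show (1:ℝ) ∈ Ioi 0 by norm_num) ht
  simp only [Real.log_one] at h
  norm_num at h
  linarith

/-- cubic upper bound for log on (0,∞). -/
private lemma log_le_cubic {t : ℝ} (ht : 0 < t) :
    Real.log t ≤ (t-1) - (t-1)^2/2 + (t-1)^3/3 := by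
  set φ : ℝ → ℝ := fun t => (t-1) - (t-1)^2/2 + (t-1)^3/3 - Real.log t with hφ
  have hasD : ∀ t : ℝ, 0 < t → HasDerivAt φ ((t-1)^3/t) t := by
    intro t ht0
    have hl := Real.hasDerivAt_log ht0.ne'
    have h1 : HasDerivAt (fun t : ℝ => t - 1) 1 t := (hasDerivAt_id t).sub_const 1
    have h := ((h1.sub ((h1.pow 2).div_const 2)).add ((h1.pow 3).div_const 3)).sub hl
    refine h.congr_deriv ?_
    field_simp
    ring
  have hcont : ContinuousOn φ (Ioi 0) := by
    apply ContinuousOn.sub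
    · fun_prop
    · exact Real.continuousOn_log.mono (fun t ht => ne_of_gt ht)
  have hφ1 : φ 1 = 0 := by simp [hφ, Real.log_one]
  have key : 0 ≤ φ t := by
    rcases le_total t 1 with h1 | h1
    · have hanti : AntitoneOn φ (Ioc 0 1) := by
        apply antitoneOn_of_deriv_nonpos (convex_Ioc 0 1)
          (hcont.mono (fun s hs => hs.1))
        · intro s hs
          rw [interior_Ioc] at hs
          exact (hasD s hs.1).differentiableAt.differentiableWithinAt
        · intro s hs
          rw [interior_Ioc] at hs
          have hs0 : 0 < s := hs.1
          have hs1 : s < 1 := hs.2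
          rw [(hasD s hs0).deriv]
          apply div_nonpos_of_nonpos_of_nonneg _ hs0.le
          nlinarith [sq_nonneg (s-1)]
      have := hanti ⟨ht, h1⟩ ⟨one_pos, le_refl 1⟩ h1
      linarith [hφ1 ▸ this]
    · have hmono : MonotoneOn φ (Ici 1) := by
        apply monotoneOn_of_deriv_nonneg (convex_Ici 1)
          (hcont.mono (fun s hs => mem_Ioi.2 (lt_of_lt_of_le one_pos hs)))
        · intro s hs
          rw [interior_Ici] at hs
          have hs1 : 1 < s := hs
          exact (hasD s (lt_trans one_pos hs1)).differentiableAt.differentiableWithinAt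
        · intro s hs
          rw [interior_Ici] at hs
          have hs1 : 1 < s := hs
          rw [(hasD s (lt_trans one_pos hs1)).deriv]
          exact div_nonneg (pow_nonneg (by linarith) 3) (by linarith)
      have := hmono (show (1:ℝ) ∈ Ici 1 from mem_Ici.2 le_rfl)
        (show t ∈ Ici 1 from mem_Ici.2 h1) h1
      linarith [hφ1 ▸ this]
  simp only [hφ] at key
  linarith

/-- Lower bound: 2(t-1)+(t-1)²-(t-1)³/3 ≤ 2t log t for t ≥ 0. -/
private lemma lowerA {t : ℝ} (ht : 0 ≤ t) :
    2*(t-1) + (t-1)^2 - (t-1)^3/3 ≤ 2*t*Real.log t := by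
  rcases eq_or_lt_of_le ht with rfl | ht0
  · simp [Real.log_zero]
    norm_num
  set F : ℝ → ℝ := fun t => 2*(t*Real.log t) - (2*(t-1) + (t-1)^2 - (t-1)^3/3) with hF
  have hasD : ∀ s : ℝ, 0 < s → HasDerivAt F (2*Real.log s + s^2 - 4*s + 3) s := by
    intro s hs0
    have hlog : HasDerivAt (fun s : ℝ => s * Real.log s) (1 * Real.log s + s * s⁻¹) s :=
      (hasDerivAt_id s).mul (Real.hasDerivAt_log hs0.ne')
    have h1 : HasDerivAt (fun s : ℝ => s - 1) 1 s := (hasDerivAt_id s).sub_const 1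
    have hp := ((h1.const_mul 2).add ((h1.pow 2))).sub ((h1.pow 3).div_const 3)
    have h := (hlog.const_mul 2).sub hp
    refine h.congr_deriv ?_
    field_simp
    ring
  have hcont : ContinuousOn F (Ioi 0) := by
    apply ContinuousOn.sub
    · exact (continuousOn_id.mul
        (Real.continuousOn_log.mono (fun s hs => ne_of_gt hs))).const_smul (2:ℝ) |>.congr
        (fun s _ => by simp [smul_eq_mul])
    · fun_prop
  have hF1 : F 1 = 0 := by simp [hF, Real.log_one]
  have key : 0 ≤ F t := by
    rcases le_total t 1 with h1 | h1
    · have hanti : AntitoneOn F (Ioc 0 1) := by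
        apply antitoneOn_of_deriv_nonpos (convex_Ioc 0 1)
          (hcont.mono (fun s hs => hs.1))
        · intro s hs
          rw [interior_Ioc] at hs
          exact (hasD s hs.1).differentiableAt.differentiableWithinAt
        · intro s hs
          rw [interior_Ioc] at hs
          have hs0 : 0 < s := hs.1
          have hs1 : s < 1 := hs.2
          rw [(hasD s hs0).deriv]
          have hla := log_le_artanh hs0 hs1.le
          have h2 : 4*(s-1)/(s+1) ≤ -(s^2 - 4*s + 3) := by
            rw [div_le_iff₀ (by linarith : (0:ℝ) < s + 1)]
            nlinarith [mul_nonneg (by linarith : (0:ℝ) ≤ 1 - s) (sq_nonneg (1-s))]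
          have hla2 : 2 * Real.log s ≤ 4*(s-1)/(s+1) := by
            calc 2*Real.log s ≤ 2*(2*(s-1)/(s+1)) := by linarith
              _ = 4*(s-1)/(s+1) := by ring
          linarith
      have := hanti ⟨ht0, h1⟩ ⟨one_pos, le_refl 1⟩ h1
      have h0 : F 1 ≤ F t := this
      rw [hF1] at h0
      exact h0
    · have hmono : MonotoneOn F (Ici 1) := by
        apply monotoneOn_of_deriv_nonneg (convex_Ici 1)
          (hcont.mono (fun s hs => mem_Ioi.2 (lt_of_lt_of_le one_pos hs)))
        · intro s hs
          rw [interior_Ici] at hs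
          have hs1 : 1 < s := hs
          exact (hasD s (lt_trans one_pos hs1)).differentiableAt.differentiableWithinAt
        · intro s hs
          rw [interior_Ici] at hs
          have hs1 : 1 < s := hs
          rw [(hasD s (lt_trans one_pos hs1)).deriv]
          have hga := log_ge_artanh hs1.le
          have h2 : -(s^2 - 4*s + 3) ≤ 4*(s-1)/(s+1) := by
            rw [le_div_iff₀ (by linarith : (0:ℝ) < s + 1)]
            nlinarith [mul_nonneg (by linarith : (0:ℝ) ≤ s - 1) (sq_nonneg (s-1))]
          have hga2 : 4*(s-1)/(s+1) ≤ 2 * Real.log s := by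
            calc (4*(s-1)/(s+1) : ℝ) = 2*(2*(s-1)/(s+1)) := by ring
              _ ≤ 2*Real.log s := by linarith
          linarith
      have := hmono (show (1:ℝ) ∈ Ici 1 from mem_Ici.2 le_rfl)
        (show t ∈ Ici 1 from mem_Ici.2 h1) h1
      have h0 : F 1 ≤ F t := this
      rw [hF1] at h0
      exact h0
  simp only [hF] at key
  linarith

/-- Upper bound: 2t log t ≤ 2(t-1)+(t-1)²-(t-1)³/3 + 2(t-1)⁴/3 for t ≥ 0. -/
private lemma upperB {t : ℝ} (ht : 0 ≤ t) :
    2*t*Real.log t ≤ 2*(t-1) + (t-1)^2 - (t-1)^3/3 + 2*(t-1)^4/3 := by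
  rcases eq_or_lt_of_le ht with rfl | ht0
  · simp [Real.log_zero]
    norm_num
  have h := mul_le_mul_of_nonneg_left (log_le_cubic ht0) (by positivity : (0:ℝ) ≤ 2*t)
  have heq : 2*t*((t-1) - (t-1)^2/2 + (t-1)^3/3)
      = 2*(t-1) + (t-1)^2 - (t-1)^3/3 + 2*(t-1)^4/3 := by ring
  nlinarith [h, heq]

private lemma key_t {t : ℝ} (ht : 0 ≤ t) :
    |2*t*Real.log t - 2*(t-1) - (t-1)^2 + (t-1)^3/3| ≤ 2*(t-1)^4/3 := by
  rw [abs_le]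
  constructor
  · have h1 := lowerA ht
    nlinarith [h1, sq_nonneg ((t-1)^2)]
  · have h2 := upperB ht
    linarith

theorem stmt14 (a : ℝ) (ha : 0 < a) (x : ℝ) (hx : 0 ≤ x) :
    |2 * x * Real.log (x / a) - 2 * (x - a) - (x - a) ^ 2 / a + (x - a) ^ 3 / (3 * a ^ 2)|
      ≤ 2 * (x - a) ^ 4 / (3 * a ^ 3) := by
  set t := x / a with htdef
  have ht : 0 ≤ t := div_nonneg hx ha.le
  have hxat : x = a * t := by rw [htdef]; field_simp
  have e1 : 2 * x * Real.log (x / a) - 2 * (x - a) - (x - a) ^ 2 / a + (x - a) ^ 3 / (3 * a ^ 2)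
      = a * (2*t*Real.log t - 2*(t-1) - (t-1)^2 + (t-1)^3/3) := by
    rw [hxat]
    field_simp
  have e2 : 2 * (x - a) ^ 4 / (3 * a ^ 3) = a * (2*(t-1)^4/3) := by
    rw [hxat]
    field_simp
  rw [e1, e2, abs_mul, abs_of_pos ha]
  exact mul_le_mul_of_nonneg_left (key_t ht) ha.le
end

section
/- Let a > 0 and λ ≥ 3. Then for all x ≥ 0, |x^{λ+1}/a^λ − a − (λ+1)(x−a) − (λ(λ+1)/(2a))(x−a)² − ((λ−1)λ(λ+1)/(6a²))(x−a)³| ≤ ((λ−2)(λ−1)λ(λ+1)/24) · (1 + (x/a)^{λ−3}) · (x−a)⁴/a³. -/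
open Real Set

lemma my_step {a b : ℝ} {f f' g g' : ℝ → ℝ} (hab : a ≤ b)
    (hf : ∀ s ∈ Set.Icc a b, HasDerivAt f (f' s) s)
    (hg : ∀ s ∈ Set.Icc a b, HasDerivAt g (g' s) s)
    (hbd : ∀ s ∈ Set.Icc a b, |f' s| ≤ g' s) :
    |f b - f a| ≤ g b - g a := by
  have key : ∀ (h h' : ℝ → ℝ), (∀ s ∈ Set.Icc a b, HasDerivAt h (h' s) s) →
      (∀ s ∈ Set.Icc a b, 0 ≤ h' s) → h a ≤ h b := by
    intro h h' hh hpos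
    have hmono := monotoneOn_of_hasDerivWithinAt_nonneg (convex_Icc a b)
      (fun s hs => (hh s hs).continuousAt.continuousWithinAt)
      (fun s hs => ((hh s (interior_subset hs)).hasDerivWithinAt).mono interior_subset)
      (fun s hs => hpos s (interior_subset hs))
    exact hmono (Set.left_mem_Icc.2 hab) (Set.right_mem_Icc.2 hab) hab
  have h1 := key (fun s => g s - f s) (fun s => g' s - f' s)
      (fun s hs => (hg s hs).sub (hf s hs))
      (fun s hs => by have := (abs_le.1 (hbd s hs)).2; linarith)
  have h2 := key (fun s => g s + f s) (fun s => g' s + f' s)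
      (fun s hs => (hg s hs).add (hf s hs))
      (fun s hs => by have := (abs_le.1 (hbd s hs)).1; linarith)
  rw [abs_le]; constructor <;> linarith

lemma my_hd0 (μ s : ℝ) (hs : 0 < s) :
    HasDerivAt (fun u : ℝ => u ^ μ - 1 - μ*(u-1) - μ*(μ-1)/2*(u-1)^2 - μ*(μ-1)*(μ-2)/6*(u-1)^3)
      (μ * s ^ (μ-1) - μ - μ*(μ-1)*(s-1) - μ*(μ-1)*(μ-2)/2*(s-1)^2) s := by
  have hu : HasDerivAt (fun u : ℝ => u - 1) 1 s := (hasDerivAt_id s).sub_const 1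
  have h := (((Real.hasDerivAt_rpow_const (p := μ) (Or.inl hs.ne')).sub_const 1).sub
      (hu.const_mul μ)).sub ((hu.pow 2).const_mul (μ*(μ-1)/2)) |>.sub
      ((hu.pow 3).const_mul (μ*(μ-1)*(μ-2)/6))
  refine h.congr_deriv ?_
  ring

lemma my_hd1 (μ s : ℝ) (hs : 0 < s) :
    HasDerivAt (fun u : ℝ => μ * u ^ (μ-1) - μ - μ*(μ-1)*(u-1) - μ*(μ-1)*(μ-2)/2*(u-1)^2)
      (μ*(μ-1) * s ^ (μ-2) - μ*(μ-1) - μ*(μ-1)*(μ-2)*(s-1)) s := by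
  have hu : HasDerivAt (fun u : ℝ => u - 1) 1 s := (hasDerivAt_id s).sub_const 1
  have h := (((Real.hasDerivAt_rpow_const (p := μ-1) (Or.inl hs.ne')).const_mul μ).sub_const μ).sub
      (hu.const_mul (μ*(μ-1))) |>.sub ((hu.pow 2).const_mul (μ*(μ-1)*(μ-2)/2))
  refine h.congr_deriv ?_
  rw [show μ - 1 - 1 = μ - 2 by ring]
  ring

lemma my_hd2 (μ s : ℝ) (hs : 0 < s) :
    HasDerivAt (fun u : ℝ => μ*(μ-1) * u ^ (μ-2) - μ*(μ-1) - μ*(μ-1)*(μ-2)*(u-1))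
      (μ*(μ-1)*(μ-2) * s ^ (μ-3) - μ*(μ-1)*(μ-2)) s := by
  have hu : HasDerivAt (fun u : ℝ => u - 1) 1 s := (hasDerivAt_id s).sub_const 1
  have h := (((Real.hasDerivAt_rpow_const (p := μ-2) (Or.inl hs.ne')).const_mul (μ*(μ-1))).sub_const
      (μ*(μ-1))).sub (hu.const_mul (μ*(μ-1)*(μ-2)))
  refine h.congr_deriv ?_
  rw [show μ - 2 - 1 = μ - 3 by ring]
  ring

lemma my_hd3 (μ s : ℝ) (hs : 0 < s) :
    HasDerivAt (fun u : ℝ => μ*(μ-1)*(μ-2) * u ^ (μ-3) - μ*(μ-1)*(μ-2))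
      (μ*(μ-1)*(μ-2)*(μ-3) * s ^ (μ-4)) s := by
  have h := ((Real.hasDerivAt_rpow_const (p := μ-3) (Or.inl hs.ne')).const_mul
      (μ*(μ-1)*(μ-2))).sub_const (μ*(μ-1)*(μ-2))
  refine h.congr_deriv ?_
  rw [show μ - 3 - 1 = μ - 4 by ring]
  ring

lemma my_key (μ t : ℝ) (hμ : 4 ≤ μ) (ht : 0 ≤ t) :
    |t ^ μ - 1 - μ*(t-1) - μ*(μ-1)/2*(t-1)^2 - μ*(μ-1)*(μ-2)/6*(t-1)^3|
      ≤ μ*(μ-1)*(μ-2)*(μ-3)/24 * (1 + t ^ (μ-4)) * (t-1)^4 := by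
  have hc0 : (0:ℝ) ≤ μ*(μ-1)*(μ-2)*(μ-3) :=
    mul_nonneg (mul_nonneg (mul_nonneg (by linarith) (by linarith)) (by linarith)) (by linarith)
  rcases eq_or_lt_of_le ht with h0 | ht0
  · -- t = 0
    subst h0
    rw [Real.zero_rpow (by linarith : (0:ℝ) < μ).ne']
    rcases eq_or_lt_of_le hμ with h4 | h4
    · subst h4
      norm_num
    · rw [Real.zero_rpow (by linarith : (0:ℝ) < μ - 4).ne']
      have : |(0:ℝ) - 1 - μ*(0-1) - μ*(μ-1)/2*(0-1)^2 - μ*(μ-1)*(μ-2)/6*(0-1)^3|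
          = (μ-1)*(μ-2)*(μ-3)/6 := by
        rw [abs_of_nonneg (by nlinarith)]; ring
      rw [this]
      nlinarith
  rcases le_or_gt 1 t with h1t | ht1
  · -- 1 ≤ t
    set K := μ*(μ-1)*(μ-2)*(μ-3) * t ^ (μ-4) with hK
    have hKnn : 0 ≤ K := by positivity
    have hpos : ∀ s ∈ Icc (1:ℝ) t, (0:ℝ) < s := fun s hs => lt_of_lt_of_le one_pos hs.1 |>.trans_le le_rfl
    have h4 : ∀ s ∈ Icc (1:ℝ) t, |μ*(μ-1)*(μ-2)*(μ-3) * s ^ (μ-4)| ≤ K := by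
      intro s hs
      rw [abs_of_nonneg (mul_nonneg hc0 (Real.rpow_nonneg (by linarith [hs.1]) _))]
      apply mul_le_mul_of_nonneg_left _ hc0
      exact Real.rpow_le_rpow (by linarith [hs.1]) hs.2 (by linarith)
    have h3 : ∀ s ∈ Icc (1:ℝ) t, |μ*(μ-1)*(μ-2) * s ^ (μ-3) - μ*(μ-1)*(μ-2)| ≤ K * (s-1) := by
      intro s hs
      have step := my_step (a := 1) (b := s) hs.1
        (f := fun u : ℝ => μ*(μ-1)*(μ-2) * u ^ (μ-3) - μ*(μ-1)*(μ-2))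
        (f' := fun u => μ*(μ-1)*(μ-2)*(μ-3) * u ^ (μ-4))
        (g := fun u => K * u) (g' := fun _ => K)
        (fun u hu => my_hd3 μ u (by linarith [hu.1]))
        (fun u hu => by simpa using (hasDerivAt_id u).const_mul K)
        (fun u hu => h4 u ⟨hu.1, le_trans hu.2 hs.2⟩)
      simp only [Real.one_rpow] at step
      calc |μ*(μ-1)*(μ-2) * s ^ (μ-3) - μ*(μ-1)*(μ-2)|
          = |(μ*(μ-1)*(μ-2) * s ^ (μ-3) - μ*(μ-1)*(μ-2)) - (μ*(μ-1)*(μ-2) * 1 - μ*(μ-1)*(μ-2))| := by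
            ring_nf
        _ ≤ K * s - K * 1 := step
        _ = K * (s - 1) := by ring
    have h2 : ∀ s ∈ Icc (1:ℝ) t,
        |μ*(μ-1) * s ^ (μ-2) - μ*(μ-1) - μ*(μ-1)*(μ-2)*(s-1)| ≤ K * (s-1)^2 / 2 := by
      intro s hs
      have step := my_step (a := 1) (b := s) hs.1
        (f := fun u : ℝ => μ*(μ-1) * u ^ (μ-2) - μ*(μ-1) - μ*(μ-1)*(μ-2)*(u-1))
        (f' := fun u => μ*(μ-1)*(μ-2) * u ^ (μ-3) - μ*(μ-1)*(μ-2))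
        (g := fun u => K * (u-1)^2 / 2) (g' := fun u => K * (u-1))
        (fun u hu => my_hd2 μ u (by linarith [hu.1]))
        (fun u hu => by
          have := (((hasDerivAt_id u).sub_const 1).pow 2).const_mul (K/2)
          convert this using 1
          · rfl
          · rfl
          · funext v; simp only [id_eq, Pi.pow_apply]; ring
          · simp only [id_eq]; push_cast; ring)
        (fun u hu => h3 u ⟨hu.1, le_trans hu.2 hs.2⟩)
      simp only [Real.one_rpow] at step
      calc |μ*(μ-1) * s ^ (μ-2) - μ*(μ-1) - μ*(μ-1)*(μ-2)*(s-1)|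
          = |(μ*(μ-1) * s ^ (μ-2) - μ*(μ-1) - μ*(μ-1)*(μ-2)*(s-1))
              - (μ*(μ-1) * 1 - μ*(μ-1) - μ*(μ-1)*(μ-2)*(1-1))| := by ring_nf
        _ ≤ K * (s-1)^2 / 2 - K * (1-1)^2 / 2 := step
        _ = K * (s-1)^2 / 2 := by ring
    have h1 : ∀ s ∈ Icc (1:ℝ) t,
        |μ * s ^ (μ-1) - μ - μ*(μ-1)*(s-1) - μ*(μ-1)*(μ-2)/2*(s-1)^2| ≤ K * (s-1)^3 / 6 := by
      intro s hs
      have step := my_step (a := 1) (b := s) hs.1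
        (f := fun u : ℝ => μ * u ^ (μ-1) - μ - μ*(μ-1)*(u-1) - μ*(μ-1)*(μ-2)/2*(u-1)^2)
        (f' := fun u => μ*(μ-1) * u ^ (μ-2) - μ*(μ-1) - μ*(μ-1)*(μ-2)*(u-1))
        (g := fun u => K * (u-1)^3 / 6) (g' := fun u => K * (u-1)^2 / 2)
        (fun u hu => my_hd1 μ u (by linarith [hu.1]))
        (fun u hu => by
          have := (((hasDerivAt_id u).sub_const 1).pow 3).const_mul (K/6)
          convert this using 1
          · rfl
          · rfl
          · funext v; simp only [id_eq, Pi.pow_apply]; ring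
          · simp only [id_eq]; push_cast; ring)
        (fun u hu => h2 u ⟨hu.1, le_trans hu.2 hs.2⟩)
      simp only [Real.one_rpow] at step
      calc |μ * s ^ (μ-1) - μ - μ*(μ-1)*(s-1) - μ*(μ-1)*(μ-2)/2*(s-1)^2|
          = |(μ * s ^ (μ-1) - μ - μ*(μ-1)*(s-1) - μ*(μ-1)*(μ-2)/2*(s-1)^2)
              - (μ * 1 - μ - μ*(μ-1)*(1-1) - μ*(μ-1)*(μ-2)/2*(1-1)^2)| := by ring_nf
        _ ≤ K * (s-1)^3 / 6 - K * (1-1)^3 / 6 := step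
        _ = K * (s-1)^3 / 6 := by ring
    have h0 : |t ^ μ - 1 - μ*(t-1) - μ*(μ-1)/2*(t-1)^2 - μ*(μ-1)*(μ-2)/6*(t-1)^3|
        ≤ K * (t-1)^4 / 24 := by
      have step := my_step (a := 1) (b := t) h1t
        (f := fun u : ℝ => u ^ μ - 1 - μ*(u-1) - μ*(μ-1)/2*(u-1)^2 - μ*(μ-1)*(μ-2)/6*(u-1)^3)
        (f' := fun u => μ * u ^ (μ-1) - μ - μ*(μ-1)*(u-1) - μ*(μ-1)*(μ-2)/2*(u-1)^2)
        (g := fun u => K * (u-1)^4 / 24) (g' := fun u => K * (u-1)^3 / 6)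
        (fun u hu => my_hd0 μ u (by linarith [hu.1]))
        (fun u hu => by
          have := (((hasDerivAt_id u).sub_const 1).pow 4).const_mul (K/24)
          convert this using 1
          · rfl
          · rfl
          · funext v; simp only [id_eq, Pi.pow_apply]; ring
          · simp only [id_eq]; push_cast; ring)
        h1
      simp only [Real.one_rpow] at step
      calc |t ^ μ - 1 - μ*(t-1) - μ*(μ-1)/2*(t-1)^2 - μ*(μ-1)*(μ-2)/6*(t-1)^3|
          = |(t ^ μ - 1 - μ*(t-1) - μ*(μ-1)/2*(t-1)^2 - μ*(μ-1)*(μ-2)/6*(t-1)^3)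
              - ((1:ℝ) - 1 - μ*(1-1) - μ*(μ-1)/2*(1-1)^2 - μ*(μ-1)*(μ-2)/6*(1-1)^3)| := by ring_nf
        _ ≤ K * (t-1)^4 / 24 - K * (1-1)^4 / 24 := step
        _ = K * (t-1)^4 / 24 := by ring
    refine h0.trans ?_
    rw [hK]
    have h4nn : (0:ℝ) ≤ (t-1)^4 := by positivity
    nlinarith [mul_nonneg hc0 h4nn]
  · -- 0 < t < 1
    set K := μ*(μ-1)*(μ-2)*(μ-3) with hK
    have hKnn : 0 ≤ K := hc0
    have htle : t ≤ 1 := le_of_lt ht1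
    have h4 : ∀ s ∈ Icc t 1, |μ*(μ-1)*(μ-2)*(μ-3) * s ^ (μ-4)| ≤ K := by
      intro s hs
      rw [abs_of_nonneg (mul_nonneg hc0 (Real.rpow_nonneg (le_trans ht hs.1) _))]
      have : s ^ (μ-4) ≤ 1 := Real.rpow_le_one (le_trans ht (hs.1)) hs.2 (by linarith)
      nlinarith
    have h3 : ∀ s ∈ Icc t 1, |μ*(μ-1)*(μ-2) * s ^ (μ-3) - μ*(μ-1)*(μ-2)| ≤ K * (1-s) := by
      intro s hs
      have step := my_step (a := s) (b := 1) hs.2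
        (f := fun u : ℝ => μ*(μ-1)*(μ-2) * u ^ (μ-3) - μ*(μ-1)*(μ-2))
        (f' := fun u => μ*(μ-1)*(μ-2)*(μ-3) * u ^ (μ-4))
        (g := fun u => K * u) (g' := fun _ => K)
        (fun u hu => my_hd3 μ u (by rcases hs with ⟨hs1,_⟩; rcases hu with ⟨hu1,_⟩; linarith))
        (fun u hu => by simpa using (hasDerivAt_id u).const_mul K)
        (fun u hu => h4 u ⟨le_trans hs.1 hu.1, hu.2⟩)
      simp only [Real.one_rpow] at step
      rw [abs_sub_comm] at step
      calc |μ*(μ-1)*(μ-2) * s ^ (μ-3) - μ*(μ-1)*(μ-2)|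
          = |(μ*(μ-1)*(μ-2) * s ^ (μ-3) - μ*(μ-1)*(μ-2)) - (μ*(μ-1)*(μ-2) * 1 - μ*(μ-1)*(μ-2))| := by
            ring_nf
        _ ≤ K * 1 - K * s := step
        _ = K * (1 - s) := by ring
    have h2 : ∀ s ∈ Icc t 1,
        |μ*(μ-1) * s ^ (μ-2) - μ*(μ-1) - μ*(μ-1)*(μ-2)*(s-1)| ≤ K * (1-s)^2 / 2 := by
      intro s hs
      have step := my_step (a := s) (b := 1) hs.2
        (f := fun u : ℝ => μ*(μ-1) * u ^ (μ-2) - μ*(μ-1) - μ*(μ-1)*(μ-2)*(u-1))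
        (f' := fun u => μ*(μ-1)*(μ-2) * u ^ (μ-3) - μ*(μ-1)*(μ-2))
        (g := fun u => -(K * (1-u)^2 / 2)) (g' := fun u => K * (1-u))
        (fun u hu => my_hd2 μ u (by rcases hs with ⟨hs1,_⟩; rcases hu with ⟨hu1,_⟩; linarith))
        (fun u hu => by
          have := (((hasDerivAt_id u).const_sub 1).pow 2).const_mul (-(K/2))
          convert this using 1
          · rfl
          · rfl
          · funext v; simp only [id_eq, Pi.pow_apply]; ring
          · simp only [id_eq]; push_cast; ring)
        (fun u hu => h3 u ⟨le_trans hs.1 hu.1, hu.2⟩)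
      simp only [Real.one_rpow] at step
      rw [abs_sub_comm] at step
      calc |μ*(μ-1) * s ^ (μ-2) - μ*(μ-1) - μ*(μ-1)*(μ-2)*(s-1)|
          = |(μ*(μ-1) * s ^ (μ-2) - μ*(μ-1) - μ*(μ-1)*(μ-2)*(s-1))
              - (μ*(μ-1) * 1 - μ*(μ-1) - μ*(μ-1)*(μ-2)*(1-1))| := by ring_nf
        _ ≤ -(K * (1-(1:ℝ))^2 / 2) - -(K * (1-s)^2 / 2) := step
        _ = K * (1-s)^2 / 2 := by ring
    have h1 : ∀ s ∈ Icc t 1,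
        |μ * s ^ (μ-1) - μ - μ*(μ-1)*(s-1) - μ*(μ-1)*(μ-2)/2*(s-1)^2| ≤ K * (1-s)^3 / 6 := by
      intro s hs
      have step := my_step (a := s) (b := 1) hs.2
        (f := fun u : ℝ => μ * u ^ (μ-1) - μ - μ*(μ-1)*(u-1) - μ*(μ-1)*(μ-2)/2*(u-1)^2)
        (f' := fun u => μ*(μ-1) * u ^ (μ-2) - μ*(μ-1) - μ*(μ-1)*(μ-2)*(u-1))
        (g := fun u => -(K * (1-u)^3 / 6)) (g' := fun u => K * (1-u)^2 / 2)
        (fun u hu => my_hd1 μ u (by rcases hs with ⟨hs1,_⟩; rcases hu with ⟨hu1,_⟩; linarith))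
        (fun u hu => by
          have := (((hasDerivAt_id u).const_sub 1).pow 3).const_mul (-(K/6))
          convert this using 1
          · rfl
          · rfl
          · funext v; simp only [id_eq, Pi.pow_apply]; ring
          · simp only [id_eq]; push_cast; ring)
        (fun u hu => h2 u ⟨le_trans hs.1 hu.1, hu.2⟩)
      simp only [Real.one_rpow] at step
      rw [abs_sub_comm] at step
      calc |μ * s ^ (μ-1) - μ - μ*(μ-1)*(s-1) - μ*(μ-1)*(μ-2)/2*(s-1)^2|
          = |(μ * s ^ (μ-1) - μ - μ*(μ-1)*(s-1) - μ*(μ-1)*(μ-2)/2*(s-1)^2)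
              - (μ * 1 - μ - μ*(μ-1)*(1-1) - μ*(μ-1)*(μ-2)/2*(1-1)^2)| := by ring_nf
        _ ≤ -(K * (1-(1:ℝ))^3 / 6) - -(K * (1-s)^3 / 6) := step
        _ = K * (1-s)^3 / 6 := by ring
    have h0 : |t ^ μ - 1 - μ*(t-1) - μ*(μ-1)/2*(t-1)^2 - μ*(μ-1)*(μ-2)/6*(t-1)^3|
        ≤ K * (1-t)^4 / 24 := by
      have step := my_step (a := t) (b := 1) htle
        (f := fun u : ℝ => u ^ μ - 1 - μ*(u-1) - μ*(μ-1)/2*(u-1)^2 - μ*(μ-1)*(μ-2)/6*(u-1)^3)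
        (f' := fun u => μ * u ^ (μ-1) - μ - μ*(μ-1)*(u-1) - μ*(μ-1)*(μ-2)/2*(u-1)^2)
        (g := fun u => -(K * (1-u)^4 / 24)) (g' := fun u => K * (1-u)^3 / 6)
        (fun u hu => my_hd0 μ u (lt_of_lt_of_le ht0 hu.1))
        (fun u hu => by
          have := (((hasDerivAt_id u).const_sub 1).pow 4).const_mul (-(K/24))
          convert this using 1
          · rfl
          · rfl
          · funext v; simp only [id_eq, Pi.pow_apply]; ring
          · simp only [id_eq]; push_cast; ring)
        h1
      simp only [Real.one_rpow] at step
      rw [abs_sub_comm] at step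
      calc |t ^ μ - 1 - μ*(t-1) - μ*(μ-1)/2*(t-1)^2 - μ*(μ-1)*(μ-2)/6*(t-1)^3|
          = |(t ^ μ - 1 - μ*(t-1) - μ*(μ-1)/2*(t-1)^2 - μ*(μ-1)*(μ-2)/6*(t-1)^3)
              - ((1:ℝ) - 1 - μ*(1-1) - μ*(μ-1)/2*(1-1)^2 - μ*(μ-1)*(μ-2)/6*(1-1)^3)| := by
            ring_nf
        _ ≤ -(K * (1-(1:ℝ))^4 / 24) - -(K * (1-t)^4 / 24) := step
        _ = K * (1-t)^4 / 24 := by ring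
    refine h0.trans ?_
    have h4nn : (0:ℝ) ≤ (t-1)^4 := by positivity
    have : (1-t)^4 = (t-1)^4 := by ring
    rw [this, hK]
    have hcc : (0:ℝ) ≤ μ*(μ-1)*(μ-2)*(μ-3) := hc0
    nlinarith [mul_nonneg (mul_nonneg hcc h4nn) (Real.rpow_nonneg ht (μ-4))]

theorem stmt15 (a lam : ℝ) (ha : 0 < a) (hlam : 3 ≤ lam) (x : ℝ) (hx : 0 ≤ x) :
    |x ^ (lam + 1) / a ^ lam - a - (lam + 1) * (x - a)
        - (lam * (lam + 1) / (2 * a)) * (x - a) ^ 2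
        - ((lam - 1) * lam * (lam + 1) / (6 * a ^ 2)) * (x - a) ^ 3|
      ≤ ((lam - 2) * (lam - 1) * lam * (lam + 1) / 24) * (1 + (x / a) ^ (lam - 3))
          * (x - a) ^ 4 / a ^ 3 := by
  have hkey := my_key (lam + 1) (x / a) (by linarith) (by positivity)
  rw [show lam + 1 - 1 = lam by ring, show lam + 1 - 2 = lam - 1 by ring,
    show lam + 1 - 3 = lam - 2 by ring, show lam + 1 - 4 = lam - 3 by ring] at hkey
  have hal : (0:ℝ) < a ^ lam := Real.rpow_pos_of_pos ha lam
  have e1 : x ^ (lam + 1) / a ^ lam - a - (lam + 1) * (x - a)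
        - (lam * (lam + 1) / (2 * a)) * (x - a) ^ 2
        - ((lam - 1) * lam * (lam + 1) / (6 * a ^ 2)) * (x - a) ^ 3
      = a * ((x/a) ^ (lam+1) - 1 - (lam+1)*((x/a)-1) - (lam+1)*lam/2*((x/a)-1)^2
          - (lam+1)*lam*(lam-1)/6*((x/a)-1)^3) := by
    rw [Real.div_rpow hx ha.le, Real.rpow_add ha, Real.rpow_one]
    field_simp
  obtain ⟨P, hP⟩ : ∃ P : ℝ, (x/a)^(lam-3) = P := ⟨_, rfl⟩
  rw [hP] at hkey ⊢
  calc |x ^ (lam + 1) / a ^ lam - a - (lam + 1) * (x - a)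
        - (lam * (lam + 1) / (2 * a)) * (x - a) ^ 2
        - ((lam - 1) * lam * (lam + 1) / (6 * a ^ 2)) * (x - a) ^ 3|
      = a * |(x/a) ^ (lam+1) - 1 - (lam+1)*((x/a)-1) - (lam+1)*lam/2*((x/a)-1)^2
          - (lam+1)*lam*(lam-1)/6*((x/a)-1)^3| := by
        rw [e1, abs_mul, abs_of_pos ha]
    _ ≤ a * ((lam+1)*lam*(lam-1)*(lam-2)/24 * (1 + P) * ((x/a)-1)^4) :=
        mul_le_mul_of_nonneg_left hkey ha.le
    _ = ((lam - 2) * (lam - 1) * lam * (lam + 1) / 24) * (1 + P) * (x - a) ^ 4 / a ^ 3 := by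
        field_simp
end

section
/- Let a > 0 and λ ∈ (−1, 3) with λ ≠ 0. Then for all x ≥ 0, |x^{λ+1}/a^λ − a − (λ+1)(x−a) − (λ(λ+1)/(2a))(x−a)² − ((λ−1)λ(λ+1)/(6a²))(x−a)³| ≤ (|(λ−2)(λ−1)λ|/6) · (x−a)⁴/a³. -/
open Set

set_option maxHeartbeats 1000000

private lemma key_mono16 {A B : ℝ} {f f' : ℝ → ℝ} (hAB : A ≤ B)
    (hf : ∀ s ∈ Icc A B, HasDerivAt f (f' s) s)
    (hf0 : ∀ s ∈ Icc A B, 0 ≤ f' s) : f A ≤ f B := by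
  have hmono := monotoneOn_of_hasDerivWithinAt_nonneg (f' := f') (convex_Icc A B)
    (fun s hs => (hf s hs).continuousAt.continuousWithinAt)
    (fun s hs => by
      rw [interior_Icc] at hs
      exact (hf s (Ioo_subset_Icc_self hs)).hasDerivWithinAt)
    (fun s hs => by
      rw [interior_Icc] at hs
      exact hf0 s (Ioo_subset_Icc_self hs))
  exact hmono (left_mem_Icc.2 hAB) (right_mem_Icc.2 hAB) hAB

private lemma abs_sub_le16 {A B : ℝ} {g ψ g' ψ' : ℝ → ℝ} (hAB : A ≤ B)
    (hg : ∀ s ∈ Icc A B, HasDerivAt g (g' s) s)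
    (hψ : ∀ s ∈ Icc A B, HasDerivAt ψ (ψ' s) s)
    (hle : ∀ s ∈ Icc A B, |g' s| ≤ ψ' s) :
    |g B - g A| ≤ ψ B - ψ A := by
  rw [abs_le]
  constructor
  · have := key_mono16 (f := fun s => ψ s + g s) (f' := fun s => ψ' s + g' s) hAB
      (fun s hs => (hψ s hs).add (hg s hs))
      (fun s hs => by have := (abs_le.1 (hle s hs)).1; linarith)
    linarith
  · have := key_mono16 (f := fun s => ψ s - g s) (f' := fun s => ψ' s - g' s) hAB
      (fun s hs => (hψ s hs).sub (hg s hs))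
      (fun s hs => by have := (abs_le.1 (hle s hs)).2; linarith)
    linarith

private lemma hasDerivAt_G16 (lam x : ℝ) {s : ℝ} (hs : 0 < s) :
    HasDerivAt (fun t : ℝ => t ^ (lam+1) + (lam+1) * (t ^ lam * (x - t))
      + (lam+1)*lam/2 * (t^(lam-1) * (x-t)^2) + (lam+1)*lam*(lam-1)/6 * (t^(lam-2) * (x-t)^3))
      ((lam+1)*lam*(lam-1)*(lam-2)/6 * (s^(lam-3) * (x-s)^3)) s := by
  have hne : s ≠ 0 := hs.ne'
  have hr : ∀ p : ℝ, HasDerivAt (fun t:ℝ => t ^ p) (p * s^(p-1)) s :=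
    fun p => Real.hasDerivAt_rpow_const (Or.inl hne)
  have hid : HasDerivAt (fun t:ℝ => x - t) (-1) s := (hasDerivAt_id s).const_sub x
  have h0 := hr (lam+1)
  have h1 := (hr lam).mul hid
  have h2 := (hr (lam-1)).mul (hid.pow 2)
  have h3 := (hr (lam-2)).mul (hid.pow 3)
  have := (((h0.add (h1.const_mul (lam+1))).add
      (h2.const_mul ((lam+1)*lam/2))).add (h3.const_mul ((lam+1)*lam*(lam-1)/6)))
  refine this.congr_deriv ?_
  have e1 : lam + 1 - 1 = lam := by ring
  have e2 : lam - 1 - 1 = lam - 2 := by ring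
  have e3 : lam - 2 - 1 = lam - 3 := by ring
  rw [e1, e2, e3]
  simp only [Pi.pow_apply]
  push_cast
  ring

theorem stmt16 (a lam : ℝ) (ha : 0 < a) (hlam1 : -1 < lam) (hlam3 : lam < 3) (hlam0 : lam ≠ 0)
    (x : ℝ) (hx : 0 ≤ x) :
    |x ^ (lam + 1) / a ^ lam - a - (lam + 1) * (x - a)
        - (lam * (lam + 1) / (2 * a)) * (x - a) ^ 2
        - ((lam - 1) * lam * (lam + 1) / (6 * a ^ 2)) * (x - a) ^ 3|
      ≤ (|(lam - 2) * (lam - 1) * lam| / 6) * (x - a) ^ 4 / a ^ 3 := by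
  have hal : (0:ℝ) < a ^ lam := Real.rpow_pos_of_pos ha lam
  set K : ℝ := |(lam - 2) * (lam - 1) * lam| with hK
  have hK0 : 0 ≤ K := abs_nonneg _
  rcases eq_or_lt_of_le hx with hx0 | hx0
  · -- x = 0
    rw [← hx0]
    rw [Real.zero_rpow (by linarith : lam + 1 ≠ 0), zero_div]
    have hE : -a - (lam + 1) * (0 - a) - (lam * (lam + 1) / (2 * a)) * (0 - a) ^ 2
        - ((lam - 1) * lam * (lam + 1) / (6 * a ^ 2)) * (0 - a) ^ 3
        = a / 6 * ((lam - 2) * (lam - 1) * lam) := by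
      field_simp
      ring
    rw [show (0:ℝ) - a - (lam + 1) * (0 - a) - (lam * (lam + 1) / (2 * a)) * (0 - a) ^ 2
        - ((lam - 1) * lam * (lam + 1) / (6 * a ^ 2)) * (0 - a) ^ 3
        = a / 6 * ((lam - 2) * (lam - 1) * lam) by rw [← hE]; ring]
    rw [abs_mul, abs_of_pos (by positivity : (0:ℝ) < a / 6)]
    rw [show (0:ℝ) - a = -a by ring]
    have : (-a)^4 = a^4 := by ring
    rw [this]
    rw [show K / 6 * a ^ 4 / a ^ 3 = a / 6 * K * (a^3 / a^3) by ring]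
    rw [div_self (by positivity : a^3 ≠ 0), mul_one]
  · -- x > 0
    have hL0 : (0:ℝ) < lam + 1 := by linarith
    -- the function g and its derivative
    set g : ℝ → ℝ := fun t => (t ^ (lam+1) + (lam+1) * (t ^ lam * (x - t))
      + (lam+1)*lam/2 * (t^(lam-1) * (x-t)^2)
      + (lam+1)*lam*(lam-1)/6 * (t^(lam-2) * (x-t)^3)) / a ^ lam with hg_def
    set g' : ℝ → ℝ := fun t =>
      (lam+1)*lam*(lam-1)*(lam-2)/6 * (t^(lam-3) * (x-t)^3) / a ^ lam with hg'_def
    have hgD : ∀ s : ℝ, 0 < s → HasDerivAt g (g' s) s := fun s hs =>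
      (hasDerivAt_G16 lam x hs).div_const _
    have hGx : g x = x ^ (lam+1) / a ^ lam := by
      simp [hg_def]
    have hGa : g a = a + (lam + 1) * (x - a) + (lam * (lam + 1) / (2 * a)) * (x - a) ^ 2
        + ((lam - 1) * lam * (lam + 1) / (6 * a ^ 2)) * (x - a) ^ 3 := by
      have h1 : a ^ (lam+1) = a ^ lam * a := Real.rpow_add_one ha.ne' lam
      have h2 : a ^ (lam-1) = a ^ lam / a := by
        rw [Real.rpow_sub ha, Real.rpow_one]
      have h3 : a ^ (lam-2) = a ^ lam / a ^ 2 := by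
        rw [Real.rpow_sub ha, show (2:ℝ) = ((2:ℕ):ℝ) by norm_num, Real.rpow_natCast]
      simp only [hg_def]
      rw [h1, h2, h3]
      field_simp
    have hmain : x ^ (lam + 1) / a ^ lam - a - (lam + 1) * (x - a)
        - (lam * (lam + 1) / (2 * a)) * (x - a) ^ 2
        - ((lam - 1) * lam * (lam + 1) / (6 * a ^ 2)) * (x - a) ^ 3 = g x - g a := by
      rw [hGx, hGa]; ring
    rw [hmain]
    have habsg' : ∀ s : ℝ, 0 < s →
        |g' s| = (lam+1) * K / 6 * (s^(lam-3) * |x - s|^3) / a ^ lam := by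
      intro s hs
      have hsp : (0:ℝ) < s ^ (lam-3) := Real.rpow_pos_of_pos hs _
      simp only [hg'_def]
      rw [show (lam+1)*lam*(lam-1)*(lam-2)/6 * (s^(lam-3) * (x-s)^3) / a ^ lam
          = ((lam+1)/6) * ((lam-2)*(lam-1)*lam) * s^(lam-3) * (x-s)^3 / a ^ lam by ring]
      rw [abs_div, abs_of_pos hal, abs_mul, abs_mul, abs_mul,
        abs_of_pos (by linarith : (0:ℝ) < (lam+1)/6), abs_of_pos hsp, abs_pow, ← hK]
      ring
    rcases le_total x a with hxa | hxa
    · -- 0 < x ≤ a : interval [x, a]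
      set ψ : ℝ → ℝ := fun t => K / 6 * (t^(lam-3) * (t-x)^4) / a ^ lam with hψ_def
      set ψ' : ℝ → ℝ := fun t =>
        K / 6 * ((lam-3) * t^(lam-4) * (t-x)^4 + t^(lam-3) * (4*(t-x)^3)) / a ^ lam with hψ'_def
      have hψD : ∀ s ∈ Icc x a, HasDerivAt ψ (ψ' s) s := by
        intro s hs
        have hs0 : 0 < s := lt_of_lt_of_le hx0 hs.1
        have hid : HasDerivAt (fun t:ℝ => t - x) 1 s := (hasDerivAt_id s).sub_const x
        have hrp : HasDerivAt (fun t:ℝ => t ^ (lam-3)) ((lam-3) * s^(lam-3-1)) s :=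
          Real.hasDerivAt_rpow_const (Or.inl hs0.ne')
        have := ((hrp.mul (hid.pow 4)).const_mul (K/6)).div_const (a ^ lam)
        refine this.congr_deriv ?_
        rw [show lam - 3 - 1 = lam - 4 by ring]
        simp only [hψ'_def, Pi.pow_apply]
        push_cast
        ring
      have hgD' : ∀ s ∈ Icc x a, HasDerivAt g (g' s) s := fun s hs =>
        hgD s (lt_of_lt_of_le hx0 hs.1)
      have hle : ∀ s ∈ Icc x a, |g' s| ≤ ψ' s := by
        intro s hs
        have hs0 : 0 < s := lt_of_lt_of_le hx0 hs.1
        have hsx : x ≤ s := hs.1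
        rw [habsg' s hs0, abs_sub_comm, abs_of_nonneg (by linarith : (0:ℝ) ≤ s - x)]
        simp only [hψ'_def]
        rw [div_le_div_iff_of_pos_right hal]
        have hu : (0:ℝ) < s ^ (lam-4) := Real.rpow_pos_of_pos hs0 _
        have hsplit : s ^ (lam-3) = s ^ (lam-4) * s := by
          rw [show lam - 3 = lam - 4 + 1 by ring, Real.rpow_add_one hs0.ne']
        rw [hsplit]
        nlinarith [mul_nonneg (mul_nonneg (mul_nonneg hK0 hu.le)
          (pow_nonneg (by linarith : (0:ℝ) ≤ s - x) 3))
          (mul_nonneg (by linarith : (0:ℝ) ≤ 3 - lam) hx),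
          mul_pos hu hs0]
      have hbound := abs_sub_le16 hxa hgD' hψD hle
      rw [abs_sub_comm] at hbound
      have hψa : ψ a - ψ x = K / 6 * (x - a)^4 / a ^ 3 := by
        have h3 : a ^ (lam-3) = a ^ lam / a ^ 3 := by
          rw [Real.rpow_sub ha, show (3:ℝ) = ((3:ℕ):ℝ) by norm_num, Real.rpow_natCast]
        simp only [hψ_def]
        rw [h3, sub_self]
        field_simp
        ring
      calc |g x - g a| ≤ ψ a - ψ x := hbound
        _ = K / 6 * (x - a)^4 / a ^ 3 := hψa
    · -- a ≤ x : interval [a, x]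
      set ψ : ℝ → ℝ := fun t => -(K * (x-t)^4) / (6 * a^3) with hψ_def
      set ψ' : ℝ → ℝ := fun t => K * (4*(x-t)^3) / (6 * a^3) with hψ'_def
      have hψD : ∀ s ∈ Icc a x, HasDerivAt ψ (ψ' s) s := by
        intro s hs
        have hid : HasDerivAt (fun t:ℝ => x - t) (-1) s := (hasDerivAt_id s).const_sub x
        have := (((hid.pow 4).const_mul K).neg).div_const (6 * a^3)
        refine this.congr_deriv ?_
        push_cast
        ring
      have hgD' : ∀ s ∈ Icc a x, HasDerivAt g (g' s) s := fun s hs =>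
        hgD s (lt_of_lt_of_le ha hs.1)
      have hle : ∀ s ∈ Icc a x, |g' s| ≤ ψ' s := by
        intro s hs
        have hs0 : 0 < s := lt_of_lt_of_le ha hs.1
        have hsx : s ≤ x := hs.2
        rw [habsg' s hs0, abs_of_nonneg (by linarith : (0:ℝ) ≤ x - s)]
        have hsle : s ^ (lam-3) ≤ a ^ lam / a ^ 3 := by
          have h3 : a ^ (lam-3) = a ^ lam / a ^ 3 := by
            rw [Real.rpow_sub ha, show (3:ℝ) = ((3:ℕ):ℝ) by norm_num, Real.rpow_natCast]
          rw [← h3]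
          exact Real.rpow_le_rpow_of_nonpos ha hs.1 (by linarith)
        have h1 : (lam+1) * K / 6 * (s^(lam-3) * (x-s)^3) / a ^ lam
            ≤ (lam+1) * K / 6 * ((a^lam/a^3) * (x-s)^3) / a ^ lam := by
          have hC : 0 ≤ (lam+1) * K / 6 :=
            div_nonneg (mul_nonneg (by linarith) hK0) (by norm_num)
          rw [div_le_div_iff_of_pos_right hal]
          exact mul_le_mul_of_nonneg_left
            (mul_le_mul_of_nonneg_right hsle (pow_nonneg (by linarith) 3)) hC
        have h2 : (lam+1) * K / 6 * ((a^lam/a^3) * (x-s)^3) / a ^ lam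
            = (lam+1) * (K * (x-s)^3) / (6 * a^3) := by
          field_simp
        have h3 : (lam+1) * (K * (x-s)^3) / (6 * a^3) ≤ K * (4*(x-s)^3) / (6 * a^3) := by
          rw [div_le_div_iff_of_pos_right (by positivity)]
          nlinarith [mul_nonneg hK0 (pow_nonneg (by linarith : (0:ℝ) ≤ x - s) 3)]
        simp only [hψ'_def]
        calc (lam+1) * K / 6 * (s^(lam-3) * (x-s)^3) / a ^ lam
            ≤ (lam+1) * K / 6 * ((a^lam/a^3) * (x-s)^3) / a ^ lam := h1
          _ = (lam+1) * (K * (x-s)^3) / (6 * a^3) := h2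
          _ ≤ K * (4*(x-s)^3) / (6 * a^3) := h3
      have hbound := abs_sub_le16 hxa hgD' hψD hle
      have hψx : ψ x - ψ a = K * (x - a)^4 / (6 * a^3) := by
        simp only [hψ_def]
        rw [sub_self]
        ring
      calc |g x - g a| ≤ ψ x - ψ a := hbound
        _ = K * (x - a)^4 / (6 * a^3) := hψx
        _ = K / 6 * (x - a)^4 / a ^ 3 := by ring
end

section
/- Let a > 0. Then for all x ≥ 0, |2x log(x/a) − 2(x−a) − (x−a)²/a| ≤ |x−a|³/a². -/
open Real Set

private lemma g1_hasDeriv {t : ℝ} (ht : 0 < t) :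
    HasDerivAt (fun t : ℝ => Real.log t + (t ^ 2 / 2 - 2 * t + 3 / 2))
      (1 / t + (t - 2)) t := by
  have h1 : HasDerivAt Real.log (1 / t) t := by
    simpa [one_div] using Real.hasDerivAt_log ht.ne'
  have h2 : HasDerivAt (fun t : ℝ => t ^ 2 / 2 - 2 * t + 3 / 2) (t - 2) t := by
    have h := (((hasDerivAt_pow 2 t).div_const 2).sub
      ((hasDerivAt_id t).const_mul 2)).add_const (3 / 2 : ℝ)
    exact h.congr_deriv (by push_cast; ring)
  exact h1.add h2

private lemma g2_hasDeriv {t : ℝ} (ht : 0 < t) :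
    HasDerivAt (fun t : ℝ => Real.log t - t ^ 2 / 2 + t - 3 / 2 + 1 / t)
      (1 / t - t + 1 - 1 / t ^ 2) t := by
  have h1 : HasDerivAt Real.log (1 / t) t := by
    simpa [one_div] using Real.hasDerivAt_log ht.ne'
  have h2 : HasDerivAt (fun t : ℝ => t ^ 2 / 2) ((2 * t ^ 1) / 2) t :=
    (hasDerivAt_pow 2 t).div_const 2
  have h3 : HasDerivAt (fun t : ℝ => t⁻¹) (-(t ^ 2)⁻¹) t := hasDerivAt_inv ht.ne'
  have := (((h1.sub h2).add (hasDerivAt_id t)).add_const (-(3/2) : ℝ)).add h3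
  have h4 : HasDerivAt (fun t : ℝ => Real.log t - t ^ 2 / 2 + t + -(3/2) + t⁻¹)
      (1 / t - (2 * t ^ 1) / 2 + 1 + -(t ^ 2)⁻¹) t := this
  have h5 := h4.congr_deriv (show 1 / t - (2 * t ^ 1) / 2 + 1 + -(t ^ 2)⁻¹
      = 1 / t - t + 1 - 1 / t ^ 2 by field_simp; ring)
  refine HasDerivAt.congr_of_eventuallyEq h5 ?_
  filter_upwards with s
  rw [one_div]
  ring

private lemma mono1 : MonotoneOn (fun t : ℝ => Real.log t + (t ^ 2 / 2 - 2 * t + 3 / 2))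
    (Set.Ioi 0) := by
  apply monotoneOn_of_hasDerivWithinAt_nonneg (f' := fun t => 1 / t + (t - 2)) (convex_Ioi 0)
  · apply ContinuousOn.add
    · exact Real.continuousOn_log.mono (fun x hx => ne_of_gt hx)
    · fun_prop
  · intro t ht
    rw [interior_Ioi] at ht
    exact (g1_hasDeriv ht).hasDerivWithinAt
  · intro t ht
    rw [interior_Ioi] at ht
    have ht : (0:ℝ) < t := ht
    have : 1 / t + (t - 2) = (t - 1) ^ 2 / t := by field_simp; ring
    rw [this]
    positivity

private lemma anti2 : AntitoneOn (fun t : ℝ => Real.log t - t ^ 2 / 2 + t - 3 / 2 + 1 / t)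
    (Set.Ioi 0) := by
  apply antitoneOn_of_hasDerivWithinAt_nonpos (f' := fun t => 1 / t - t + 1 - 1 / t ^ 2)
    (convex_Ioi 0)
  · apply ContinuousOn.add
    · apply ContinuousOn.sub
      · apply ContinuousOn.add
        · apply ContinuousOn.sub
          · exact Real.continuousOn_log.mono (fun x hx => ne_of_gt hx)
          · fun_prop
        · fun_prop
      · fun_prop
    · intro x hx
      exact (continuousAt_inv₀ (ne_of_gt hx)).continuousWithinAt.congr
        (fun y _ => (one_div y)) (one_div x)
  · intro t ht
    rw [interior_Ioi] at ht
    exact (g2_hasDeriv ht).hasDerivWithinAt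
  · intro t ht
    rw [interior_Ioi] at ht
    have ht : (0:ℝ) < t := ht
    have : 1 / t - t + 1 - 1 / t ^ 2 = -((t - 1) ^ 2 * (t + 1) / t ^ 2) := by
      field_simp; ring
    rw [this]
    have : 0 ≤ (t - 1) ^ 2 * (t + 1) / t ^ 2 := by positivity
    linarith

/-- log t ≤ (t-1)(3-t)/2 for 0 < t ≤ 1 -/
private lemma L1 {t : ℝ} (ht : 0 < t) (h : t ≤ 1) : Real.log t ≤ (t - 1) * (3 - t) / 2 := by
  have := mono1 (Set.mem_Ioi.mpr ht) (Set.mem_Ioi.mpr one_pos) h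
  simp only [Real.log_one] at this
  nlinarith [this]

/-- (t-1)(3-t)/2 ≤ log t for t ≥ 1 -/
private lemma L2 {t : ℝ} (h : 1 ≤ t) : (t - 1) * (3 - t) / 2 ≤ Real.log t := by
  have := mono1 (Set.mem_Ioi.mpr one_pos) (Set.mem_Ioi.mpr (lt_of_lt_of_le one_pos h)) h
  simp only [Real.log_one] at this
  nlinarith [this]

/-- (t-1)(t²-t+2)/(2t) ≤ log t for 0 < t ≤ 1 -/
private lemma L3 {t : ℝ} (ht : 0 < t) (h : t ≤ 1) :
    (t - 1) * (t ^ 2 - t + 2) / (2 * t) ≤ Real.log t := by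
  have := anti2 (Set.mem_Ioi.mpr ht) (Set.mem_Ioi.mpr one_pos) h
  simp only [Real.log_one] at this
  have key : (t - 1) * (t ^ 2 - t + 2) / (2 * t) = t ^ 2 / 2 - t + 3 / 2 - 1 / t := by
    field_simp; ring
  rw [key]
  simp only [one_div] at this ⊢
  norm_num at this
  linarith

/-- log t ≤ (t-1)(t²-t+2)/(2t) for t ≥ 1 -/
private lemma L4 {t : ℝ} (h : 1 ≤ t) :
    Real.log t ≤ (t - 1) * (t ^ 2 - t + 2) / (2 * t) := by
  have ht : (0:ℝ) < t := lt_of_lt_of_le one_pos h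
  have := anti2 (Set.mem_Ioi.mpr one_pos) (Set.mem_Ioi.mpr ht) h
  simp only [Real.log_one] at this
  have key : (t - 1) * (t ^ 2 - t + 2) / (2 * t) = t ^ 2 / 2 - t + 3 / 2 - 1 / t := by
    field_simp; ring
  rw [key]
  simp only [one_div] at this ⊢
  norm_num at this
  linarith

private lemma key_ineq {t : ℝ} (ht : 0 ≤ t) :
    |2 * t * Real.log t - 2 * (t - 1) - (t - 1) ^ 2| ≤ |t - 1| ^ 3 := by
  rcases eq_or_lt_of_le ht with h0 | h0
  · rw [← h0]
    norm_num
  rcases le_or_gt t 1 with h1 | h1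
  · have habs : |t - 1| = 1 - t := by rw [abs_of_nonpos (by linarith)]; ring
    rw [habs, abs_le]
    have hL1 := L1 h0 h1
    have hL3 := L3 h0 h1
    have m1 : 2 * t * Real.log t ≤ 2 * t * ((t - 1) * (3 - t) / 2) :=
      mul_le_mul_of_nonneg_left hL1 (by linarith)
    have m3 : 2 * t * ((t - 1) * (t ^ 2 - t + 2) / (2 * t)) ≤ 2 * t * Real.log t :=
      mul_le_mul_of_nonneg_left hL3 (by linarith)
    have e3 : 2 * t * ((t - 1) * (t ^ 2 - t + 2) / (2 * t)) = (t - 1) * (t ^ 2 - t + 2) := by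
      field_simp
    rw [e3] at m3
    constructor <;> nlinarith [m1, m3]
  · have habs : |t - 1| = t - 1 := abs_of_pos (by linarith)
    rw [habs, abs_le]
    have hL2 := L2 h1.le
    have hL4 := L4 h1.le
    have m2 : 2 * t * ((t - 1) * (3 - t) / 2) ≤ 2 * t * Real.log t :=
      mul_le_mul_of_nonneg_left hL2 (by linarith)
    have m4 : 2 * t * Real.log t ≤ 2 * t * ((t - 1) * (t ^ 2 - t + 2) / (2 * t)) :=
      mul_le_mul_of_nonneg_left hL4 (by linarith)
    have e4 : 2 * t * ((t - 1) * (t ^ 2 - t + 2) / (2 * t)) = (t - 1) * (t ^ 2 - t + 2) := by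
      field_simp
    rw [e4] at m4
    constructor <;> nlinarith [m2, m4]

theorem stmt17 (a : ℝ) (ha : 0 < a) (x : ℝ) (hx : 0 ≤ x) :
    |2 * x * Real.log (x / a) - 2 * (x - a) - (x - a) ^ 2 / a| ≤ |x - a| ^ 3 / a ^ 2 := by
  set t := x / a with htdef
  have ht : 0 ≤ t := div_nonneg hx ha.le
  have hx' : x = a * t := by rw [htdef]; field_simp
  have hE : 2 * x * Real.log (x / a) - 2 * (x - a) - (x - a) ^ 2 / a
      = a * (2 * t * Real.log t - 2 * (t - 1) - (t - 1) ^ 2) := by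
    rw [hx']
    field_simp
  have hR : |x - a| ^ 3 / a ^ 2 = a * |t - 1| ^ 3 := by
    rw [hx']
    have : a * t - a = a * (t - 1) := by ring
    rw [this, abs_mul, abs_of_pos ha]
    field_simp
  rw [hE, hR, abs_mul, abs_of_pos ha]
  exact mul_le_mul_of_nonneg_left (key_ineq ht) ha.le
end

section
/- Let a > 0 and λ ≥ 2. Then for all x ≥ 0, |x^{λ+1}/a^λ − a − (λ+1)(x−a) − (λ(λ+1)/(2a))(x−a)²| ≤ ((λ−1)λ(λ+1)/6) · (1 + (x/a)^{λ−2}) · |x−a|³/a². -/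
open Set

/-- One-directional step: if `h a = 0` and `|h' t| ≤ C * (t-a)^k` on `[a,b]`,
then `|h b| ≤ C * (b-a)^(k+1)/(k+1)`. -/
private lemma step_right {h h' : ℝ → ℝ} {a b C : ℝ} {k : ℕ} (hab : a ≤ b)
    (hd : ∀ t ∈ Icc a b, HasDerivAt h (h' t) t)
    (hb : ∀ t ∈ Icc a b, |h' t| ≤ C * (t - a) ^ k)
    (h0 : h a = 0) : |h b| ≤ C * (b - a) ^ (k + 1) / (k + 1) := by
  have key := image_norm_le_of_norm_deriv_right_le_deriv_boundary
    (f := h) (f' := h') (a := a) (b := b)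
    (B := fun t => C * (t - a) ^ (k + 1) / (k + 1)) (B' := fun t => C * (t - a) ^ k)
    (fun t ht => (hd t ht).continuousAt.continuousWithinAt)
    (fun t ht => (hd t (Ico_subset_Icc_self ht)).hasDerivWithinAt)
    (by simp [h0])
    (fun t => by
      have h1 : HasDerivAt (fun t : ℝ => (t - a) ^ (k + 1))
          ((k + 1 : ℕ) * (t - a) ^ k * 1) t :=
        by simpa [Function.comp_def] using
          ((hasDerivAt_pow (k + 1) (t - a)).comp t ((hasDerivAt_id t).sub_const a))
      have h2 := (h1.const_mul C).div_const ((k : ℝ) + 1)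
      refine h2.congr_deriv ?_
      push_cast
      field_simp)
    (fun t ht => hb t (Ico_subset_Icc_self ht))
  simpa using key (right_mem_Icc.2 hab)

/-- Two-sided step with anchor `a`. -/
private lemma step_two {h h' : ℝ → ℝ} {a b C : ℝ} {k : ℕ}
    (hd : ∀ t ∈ uIcc a b, HasDerivAt h (h' t) t)
    (hb : ∀ t ∈ uIcc a b, |h' t| ≤ C * |t - a| ^ k)
    (h0 : h a = 0) : |h b| ≤ C * |b - a| ^ (k + 1) / (k + 1) := by
  rcases le_total a b with hab | hab
  · have := step_right (hab := hab)
      (hd := fun t ht => hd t (by rwa [uIcc_of_le hab]))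
      (hb := fun t ht => by
        have := hb t (by rwa [uIcc_of_le hab])
        rwa [abs_of_nonneg (by linarith [ht.1] : (0:ℝ) ≤ t - a)] at this) h0
    rwa [abs_of_nonneg (by linarith : (0:ℝ) ≤ b - a)]
  · -- reflect: h₂ s = h (2a - s) on [a, 2a - b]
    have hab' : a ≤ 2 * a - b := by linarith
    have memmap : ∀ t ∈ Icc a (2 * a - b), 2 * a - t ∈ uIcc a b := by
      intro t ht
      rw [uIcc_of_ge hab]
      exact ⟨by linarith [ht.2], by linarith [ht.1]⟩
    have := step_right (h := fun s => h (2 * a - s)) (h' := fun s => -h' (2 * a - s))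
      (a := a) (b := 2 * a - b) (C := C) (k := k) hab'
      (fun t ht => by
        have := (hd (2 * a - t) (memmap t ht)).comp t
          (((hasDerivAt_id t).const_sub (2 * a)))
        simpa [Function.comp_def] using this)
      (fun t ht => by
        have := hb (2 * a - t) (memmap t ht)
        simp only [abs_neg]
        calc |h' (2 * a - t)| ≤ C * |2 * a - t - a| ^ k := this
          _ = C * (t - a) ^ k := by
              rw [show (2 * a - t - a) = -(t - a) by ring, abs_neg,
                abs_of_nonneg (by linarith [ht.1] : (0:ℝ) ≤ t - a)]
      )
      (by show h (2 * a - a) = 0; rw [show 2 * a - a = a by ring]; exact h0)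
    simp only [show 2 * a - (2 * a - b) = b by ring] at this
    calc |h b| ≤ C * (2 * a - b - a) ^ (k + 1) / (k + 1) := this
      _ = C * |b - a| ^ (k + 1) / (k + 1) := by
          rw [show (2 * a - b - a) = -(b - a) by ring,
            ← abs_of_nonneg (by linarith : (0:ℝ) ≤ -(b - a)), abs_neg]

theorem stmt18 (a lam : ℝ) (ha : 0 < a) (hlam : 2 ≤ lam) (x : ℝ) (hx : 0 ≤ x) :
    |x ^ (lam + 1) / a ^ lam - a - (lam + 1) * (x - a)
        - (lam * (lam + 1) / (2 * a)) * (x - a) ^ 2|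
      ≤ ((lam - 1) * lam * (lam + 1) / 6) * (1 + (x / a) ^ (lam - 2))
          * |x - a| ^ 3 / a ^ 2 := by
  have h1l : (1:ℝ) ≤ lam := by linarith
  have h2l : (0:ℝ) ≤ lam - 2 := by linarith
  have h1l1 : (1:ℝ) ≤ lam - 1 := by linarith
  have h1lp : (1:ℝ) ≤ lam + 1 := by linarith
  have hapos : 0 < a ^ lam := Real.rpow_pos_of_pos ha lam
  have ha2 : (0:ℝ) < a ^ (lam - 2) := Real.rpow_pos_of_pos ha _
  have hx2 : (0:ℝ) ≤ x ^ (lam - 2) := Real.rpow_nonneg hx _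
  set K : ℝ := (lam + 1) * lam * (lam - 1) * (a ^ (lam - 2) + x ^ (lam - 2)) with hKdef
  have t0 : ∀ t ∈ uIcc a x, (0:ℝ) ≤ t := fun t ht => le_trans (le_inf ha.le hx) ht.1
  have tb : ∀ t ∈ uIcc a x, t ^ (lam - 2) ≤ a ^ (lam - 2) + x ^ (lam - 2) := by
    intro t ht
    rcases le_total a x with h | h
    · have htx : t ≤ x := le_trans ht.2 (sup_le h le_rfl)
      have := Real.rpow_le_rpow (t0 t ht) htx h2l
      linarith
    · have hta : t ≤ a := le_trans ht.2 (sup_le le_rfl h)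
      have := Real.rpow_le_rpow (t0 t ht) hta h2l
      linarith
  -- Step 1: second-derivative difference
  have HA : ∀ t ∈ uIcc a x,
      |(lam + 1) * lam * (t ^ (lam - 1) - a ^ (lam - 1))| ≤ K * |t - a| := by
    intro t ht
    have hsub : uIcc a t ⊆ uIcc a x := uIcc_subset_uIcc left_mem_uIcc ht
    have := step_two (h := fun s => (lam + 1) * lam * (s ^ (lam - 1) - a ^ (lam - 1)))
      (h' := fun s => (lam + 1) * lam * ((lam - 1) * s ^ (lam - 1 - 1)))
      (a := a) (b := t) (C := K) (k := 0)
      (fun s _ => ((Real.hasDerivAt_rpow_const (x := s) (p := lam - 1) (Or.inr h1l1)).sub_const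
        (a ^ (lam - 1))).const_mul ((lam + 1) * lam))
      (fun s hs => by
        have hs0 : (0:ℝ) ≤ s := t0 s (hsub hs)
        have hsp : (0:ℝ) ≤ s ^ (lam - 1 - 1) := Real.rpow_nonneg hs0 _
        have hval : s ^ (lam - 1 - 1) = s ^ (lam - 2) := by
          rw [show lam - 1 - 1 = lam - 2 by ring]
        show |(lam + 1) * lam * ((lam - 1) * s ^ (lam - 1 - 1))| ≤ K * |s - a| ^ 0
        rw [pow_zero, mul_one, abs_of_nonneg (by positivity), hval]
        have := tb s (hsub hs)
        have hnn : (0:ℝ) ≤ (lam + 1) * lam * (lam - 1) := by positivity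
        rw [hKdef]
        nlinarith [Real.rpow_nonneg hs0 (lam - 2)])
      (by simp)
    simpa using this
  -- Step 2: first-derivative remainder
  have HB : ∀ t ∈ uIcc a x,
      |(lam + 1) * (t ^ lam - a ^ lam) - (lam + 1) * lam * a ^ (lam - 1) * (t - a)|
        ≤ K * |t - a| ^ 2 / 2 := by
    intro t ht
    have hsub : uIcc a t ⊆ uIcc a x := uIcc_subset_uIcc left_mem_uIcc ht
    have := step_two
      (h := fun s => (lam + 1) * (s ^ lam - a ^ lam) - (lam + 1) * lam * a ^ (lam - 1) * (s - a))
      (h' := fun s => (lam + 1) * lam * (s ^ (lam - 1) - a ^ (lam - 1)))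
      (a := a) (b := t) (C := K) (k := 1)
      (fun s _ => by
        have d1 := ((Real.hasDerivAt_rpow_const (x := s) (p := lam) (Or.inr h1l)).sub_const
          (a ^ lam)).const_mul (lam + 1)
        have d2 := ((hasDerivAt_id s).sub_const a).const_mul
          ((lam + 1) * lam * a ^ (lam - 1))
        show HasDerivAt _ ((lam + 1) * lam * (s ^ (lam - 1) - a ^ (lam - 1))) s
        refine (d1.sub d2).congr_deriv ?_
        ring)
      (fun s hs => by
        show |(lam + 1) * lam * (s ^ (lam - 1) - a ^ (lam - 1))| ≤ K * |s - a| ^ 1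
        rw [pow_one]; exact HA s (hsub hs))
      (by simp)
    calc |(lam + 1) * (t ^ lam - a ^ lam) - (lam + 1) * lam * a ^ (lam - 1) * (t - a)|
        ≤ K * |t - a| ^ (1 + 1) / ((1:ℕ) + 1) := this
      _ = K * |t - a| ^ 2 / 2 := by norm_num
  -- Step 3: function remainder
  have HC : |x ^ (lam + 1) - a ^ (lam + 1) - (lam + 1) * a ^ lam * (x - a)
      - (lam + 1) * lam * a ^ (lam - 1) * (x - a) ^ 2 / 2| ≤ K * |x - a| ^ 3 / 6 := by
    have := step_two
      (h := fun s => s ^ (lam + 1) - a ^ (lam + 1) - (lam + 1) * a ^ lam * (s - a)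
        - (lam + 1) * lam * a ^ (lam - 1) * (s - a) ^ 2 / 2)
      (h' := fun s => (lam + 1) * (s ^ lam - a ^ lam) - (lam + 1) * lam * a ^ (lam - 1) * (s - a))
      (a := a) (b := x) (C := K / 2) (k := 2)
      (fun s _ => by
        have d1 := (Real.hasDerivAt_rpow_const (x := s) (p := lam + 1) (Or.inr h1lp)).sub_const
          (a ^ (lam + 1))
        have d2 := ((hasDerivAt_id s).sub_const a).const_mul ((lam + 1) * a ^ lam)
        have d3 := (((hasDerivAt_pow 2 (s - a)).comp s
          ((hasDerivAt_id s).sub_const a)).const_mul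
          ((lam + 1) * lam * a ^ (lam - 1))).div_const 2
        show HasDerivAt _
          ((lam + 1) * (s ^ lam - a ^ lam) - (lam + 1) * lam * a ^ (lam - 1) * (s - a)) s
        refine ((d1.sub d2).sub d3).congr_deriv ?_
        rw [show lam + 1 - 1 = lam by ring]
        push_cast
        ring)
      (fun s hs => by
        have := HB s hs
        show |(lam + 1) * (s ^ lam - a ^ lam) - (lam + 1) * lam * a ^ (lam - 1) * (s - a)|
          ≤ K / 2 * |s - a| ^ 2
        calc |(lam + 1) * (s ^ lam - a ^ lam) - (lam + 1) * lam * a ^ (lam - 1) * (s - a)|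
            ≤ K * |s - a| ^ 2 / 2 := this
          _ = K / 2 * |s - a| ^ 2 := by ring)
      (by simp)
    calc |x ^ (lam + 1) - a ^ (lam + 1) - (lam + 1) * a ^ lam * (x - a)
        - (lam + 1) * lam * a ^ (lam - 1) * (x - a) ^ 2 / 2|
        ≤ K / 2 * |x - a| ^ (2 + 1) / ((2:ℕ) + 1) := this
      _ = K * |x - a| ^ 3 / 6 := by push_cast; ring
  -- algebraic identities
  have e1 : a ^ (lam + 1) = a ^ lam * a := by
    rw [Real.rpow_add ha, Real.rpow_one]
  have e2 : a ^ (lam - 1) = a ^ lam / a := by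
    rw [Real.rpow_sub ha, Real.rpow_one]
  have e3 : a ^ lam = a ^ (lam - 2) * a ^ 2 := by
    rw [← Real.rpow_natCast a 2, ← Real.rpow_add ha]
    congr 1
    push_cast
    ring
  have e4 : (x / a) ^ (lam - 2) = x ^ (lam - 2) / a ^ (lam - 2) :=
    Real.div_rpow hx ha.le _
  have eX : x ^ (lam + 1) / a ^ lam - a - (lam + 1) * (x - a)
      - (lam * (lam + 1) / (2 * a)) * (x - a) ^ 2
      = (x ^ (lam + 1) - a ^ (lam + 1) - (lam + 1) * a ^ lam * (x - a)
        - (lam + 1) * lam * a ^ (lam - 1) * (x - a) ^ 2 / 2) / a ^ lam := by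
    rw [e1, e2]
    field_simp
  have eR : ((lam - 1) * lam * (lam + 1) / 6) * (1 + (x / a) ^ (lam - 2))
      * |x - a| ^ 3 / a ^ 2 = (K * |x - a| ^ 3 / 6) / a ^ lam := by
    rw [e4, e3, hKdef]
    have ha2' : (0:ℝ) < a ^ 2 := by positivity
    field_simp
  rw [eX, eR, abs_div, abs_of_pos hapos]
  gcongr
end

section
/- Let a > 0 and λ ∈ (−1, 2) with λ ≠ 0. Then for all x ≥ 0, |x^{λ+1}/a^λ − a − (λ+1)(x−a) − (λ(λ+1)/(2a))(x−a)²| ≤ (|(λ−1)λ|/2) · |x−a|³/a². -/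
open Real Set

noncomputable def pf0 (p K e t : ℝ) : ℝ :=
  K * (t - 1) ^ 3 + e * (t ^ p - 1 - p * (t - 1) - p * (p - 1) / 2 * (t - 1) ^ 2)

noncomputable def pf1 (p K e t : ℝ) : ℝ :=
  3 * K * (t - 1) ^ 2 + e * (p * t ^ (p - 1) - p - p * (p - 1) * (t - 1))

noncomputable def pf2 (p K e t : ℝ) : ℝ :=
  6 * K * (t - 1) + e * (p * (p - 1) * t ^ (p - 2) - p * (p - 1))

noncomputable def pf3 (p K e t : ℝ) : ℝ :=
  6 * K + e * (p * (p - 1) * (p - 2) * t ^ (p - 3))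

lemma hasDerivAt_pf0 (p K e : ℝ) {t : ℝ} (ht : 0 < t) :
    HasDerivAt (pf0 p K e) (pf1 p K e t) t := by
  have h1 : HasDerivAt (fun s : ℝ => s ^ p) (p * t ^ (p - 1)) t :=
    Real.hasDerivAt_rpow_const (Or.inl ht.ne')
  have h2 : HasDerivAt (fun s : ℝ => s - 1) 1 t := (hasDerivAt_id t).sub_const 1
  have H := ((h2.pow 3).const_mul K).add
    ((((h1.sub_const 1).sub (h2.const_mul p)).sub
      ((h2.pow 2).const_mul (p * (p - 1) / 2))).const_mul e)
  refine H.congr_deriv ?_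
  simp only [pf1]; push_cast; ring

lemma hasDerivAt_pf1 (p K e : ℝ) {t : ℝ} (ht : 0 < t) :
    HasDerivAt (pf1 p K e) (pf2 p K e t) t := by
  have h1 : HasDerivAt (fun s : ℝ => s ^ (p - 1)) ((p - 1) * t ^ (p - 1 - 1)) t :=
    Real.hasDerivAt_rpow_const (Or.inl ht.ne')
  rw [show p - 1 - 1 = p - 2 by ring] at h1
  have h2 : HasDerivAt (fun s : ℝ => s - 1) 1 t := (hasDerivAt_id t).sub_const 1
  have H := (((h2.pow 2).const_mul (3 * K))).add
    ((((h1.const_mul p).sub_const p).sub (h2.const_mul (p * (p - 1)))).const_mul e)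
  refine H.congr_deriv ?_
  simp only [pf2]; push_cast; ring

lemma hasDerivAt_pf2 (p K e : ℝ) {t : ℝ} (ht : 0 < t) :
    HasDerivAt (pf2 p K e) (pf3 p K e t) t := by
  have h1 : HasDerivAt (fun s : ℝ => s ^ (p - 2)) ((p - 2) * t ^ (p - 2 - 1)) t :=
    Real.hasDerivAt_rpow_const (Or.inl ht.ne')
  rw [show p - 2 - 1 = p - 3 by ring] at h1
  have h2 : HasDerivAt (fun s : ℝ => s - 1) 1 t := (hasDerivAt_id t).sub_const 1
  have H := (h2.const_mul (6 * K)).add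
    (((h1.const_mul (p * (p - 1))).sub_const (p * (p - 1))).const_mul e)
  refine H.congr_deriv ?_
  simp only [pf3]; push_cast; ring

lemma cont_pf0 (p K e : ℝ) (hp : 0 < p) : Continuous (pf0 p K e) := by
  have h : Continuous fun t : ℝ => t ^ p := by
    rw [continuous_iff_continuousAt]
    intro x
    rcases eq_or_ne x 0 with rfl | hx
    · exact Real.continuousAt_rpow_const 0 p (Or.inr hp.le)
    · exact Real.continuousAt_rpow_const x p (Or.inl hx)
  unfold pf0
  fun_prop

lemma pf0_one (p K e : ℝ) : pf0 p K e 1 = 0 := by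
  simp only [pf0]; rw [Real.one_rpow]; ring

lemma pf1_one (p K e : ℝ) : pf1 p K e 1 = 0 := by
  simp only [pf1]; rw [Real.one_rpow]; ring

lemma pf2_one (p K e : ℝ) : pf2 p K e 1 = 0 := by
  simp only [pf2]; rw [Real.one_rpow]; ring

lemma mono_chain {f f' : ℝ → ℝ} {a b : ℝ}
    (hd : ∀ s ∈ Icc a b, HasDerivAt f (f' s) s)
    (hsgn : ∀ s ∈ Ioo a b, 0 ≤ f' s) : MonotoneOn f (Icc a b) := by
  apply monotoneOn_of_hasDerivWithinAt_nonneg (f' := f') (convex_Icc a b)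
  · exact fun s hs => (hd s hs).continuousAt.continuousWithinAt
  · intro s hs
    rw [interior_Icc] at hs
    exact (hd s (Ioo_subset_Icc_self hs)).hasDerivWithinAt
  · intro s hs; rw [interior_Icc] at hs; exact hsgn s hs

lemma anti_chain {f f' : ℝ → ℝ} {a b : ℝ}
    (hd : ∀ s ∈ Icc a b, HasDerivAt f (f' s) s)
    (hsgn : ∀ s ∈ Ioo a b, f' s ≤ 0) : AntitoneOn f (Icc a b) := by
  apply antitoneOn_of_hasDerivWithinAt_nonpos (f' := f') (convex_Icc a b)
  · exact fun s hs => (hd s hs).continuousAt.continuousWithinAt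
  · intro s hs
    rw [interior_Icc] at hs
    exact (hd s (Ioo_subset_Icc_self hs)).hasDerivWithinAt
  · intro s hs; rw [interior_Icc] at hs; exact hsgn s hs

lemma ici_bound (p : ℝ) (hp0 : 0 < p) (hp3 : p < 3) (e : ℝ) (he1 : e = 1 ∨ e = -1)
    {t : ℝ} (ht : 1 ≤ t) : 0 ≤ pf0 p (|(p - 1) * (p - 2)| / 2) e t := by
  set b := (p - 1) * (p - 2) with hbdef
  set B := |b| / 2 with hBdef
  have habse : |e| = 1 := by rcases he1 with rfl | rfl <;> simp
  have h3 : ∀ s ∈ Ioo 1 t, 0 ≤ pf3 p B e s := by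
    intro s hs
    have hs1 : (1 : ℝ) ≤ s := hs.1.le
    have hr : s ^ (p - 3) ≤ 1 := Real.rpow_le_one_of_one_le_of_nonpos hs1 (by linarith)
    have hrnn : 0 ≤ s ^ (p - 3) := Real.rpow_nonneg (by linarith) _
    have habs : |e * (p * (p - 1) * (p - 2) * s ^ (p - 3))| ≤ 6 * B := by
      rw [abs_mul, habse, one_mul, abs_mul, abs_of_nonneg hrnn,
        show p * (p - 1) * (p - 2) = p * b by rw [hbdef]; ring, abs_mul, abs_of_pos hp0, hBdef]
      have h1 : p * |b| * s ^ (p - 3) ≤ p * |b| * 1 := by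
        apply mul_le_mul_of_nonneg_left hr (by positivity)
      nlinarith [abs_nonneg b]
    have := (abs_le.mp habs).1
    simp only [pf3]
    linarith
  have hd2 : ∀ s ∈ Icc 1 t, HasDerivAt (pf2 p B e) (pf3 p B e s) s :=
    fun s hs => hasDerivAt_pf2 p B e (by linarith [hs.1])
  have h2 : ∀ s ∈ Icc 1 t, 0 ≤ pf2 p B e s := by
    intro s hs
    have := mono_chain hd2 h3 (left_mem_Icc.mpr ht) hs hs.1
    rw [pf2_one] at this; exact this
  have hd1 : ∀ s ∈ Icc 1 t, HasDerivAt (pf1 p B e) (pf2 p B e s) s :=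
    fun s hs => hasDerivAt_pf1 p B e (by linarith [hs.1])
  have h1 : ∀ s ∈ Icc 1 t, 0 ≤ pf1 p B e s := by
    intro s hs
    have := mono_chain hd1 (fun s hs => h2 s (Ioo_subset_Icc_self hs))
      (left_mem_Icc.mpr ht) hs hs.1
    rw [pf1_one] at this; exact this
  have hd0 : ∀ s ∈ Icc 1 t, HasDerivAt (pf0 p B e) (pf1 p B e s) s :=
    fun s hs => hasDerivAt_pf0 p B e (by linarith [hs.1])
  have := mono_chain hd0 (fun s hs => h1 s (Ioo_subset_Icc_self hs))
    (left_mem_Icc.mpr ht) (right_mem_Icc.mpr ht) ht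
  rw [pf0_one] at this; exact this

lemma anti_chain' {f f' : ℝ → ℝ} {a b : ℝ} (hc : ContinuousOn f (Icc a b))
    (hd : ∀ s ∈ Ioo a b, HasDerivAt f (f' s) s)
    (hsgn : ∀ s ∈ Ioo a b, f' s ≤ 0) : AntitoneOn f (Icc a b) := by
  apply antitoneOn_of_hasDerivWithinAt_nonpos (f' := f') (convex_Icc a b) hc
  · intro s hs
    rw [interior_Icc] at hs
    exact (hd s hs).hasDerivWithinAt
  · intro s hs; rw [interior_Icc] at hs; exact hsgn s hs

lemma icc_easy (p : ℝ) (hp0 : 0 < p) (e : ℝ)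
    (he : e * ((p - 1) * (p - 2)) = -|(p - 1) * (p - 2)|)
    {t : ℝ} (ht0 : 0 ≤ t) (ht1 : t ≤ 1) : 0 ≤ pf0 p (-(|(p - 1) * (p - 2)| / 2)) e t := by
  set b := (p - 1) * (p - 2) with hbdef
  set B := |b| / 2 with hBdef
  have hBnn : 0 ≤ B := by positivity
  have h3 : ∀ s ∈ Ioo (0 : ℝ) 1, pf3 p (-B) e s ≤ 0 := by
    intro s hs
    have hrnn : 0 ≤ s ^ (p - 3) := Real.rpow_nonneg hs.1.le _
    have he2 : e * (p * (p - 1) * (p - 2) * s ^ (p - 3)) = p * (e * b) * s ^ (p - 3) := by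
      rw [hbdef]; ring
    simp only [pf3, he2, he]
    nlinarith [mul_nonneg (mul_nonneg hp0.le (abs_nonneg b)) hrnn]
  have h2 : ∀ s ∈ Ioo (0 : ℝ) 1, 0 ≤ pf2 p (-B) e s := by
    intro s hs
    have hanti := anti_chain (f := pf2 p (-B) e) (f' := pf3 p (-B) e)
      (fun u hu => hasDerivAt_pf2 p (-B) e (lt_of_lt_of_le hs.1 hu.1))
      (fun u hu => h3 u ⟨lt_trans hs.1 hu.1, hu.2⟩)
    have := hanti (left_mem_Icc.mpr hs.2.le) (right_mem_Icc.mpr hs.2.le) hs.2.le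
    rw [pf2_one] at this; exact this
  have h1 : ∀ s ∈ Ioo (0 : ℝ) 1, pf1 p (-B) e s ≤ 0 := by
    intro s hs
    have hmono := mono_chain (f := pf1 p (-B) e) (f' := pf2 p (-B) e)
      (fun u hu => hasDerivAt_pf1 p (-B) e (lt_of_lt_of_le hs.1 hu.1))
      (fun u hu => h2 u ⟨lt_trans hs.1 hu.1, hu.2⟩)
    have := hmono (left_mem_Icc.mpr hs.2.le) (right_mem_Icc.mpr hs.2.le) hs.2.le
    rw [pf1_one] at this; exact this
  have hanti0 := anti_chain' (f := pf0 p (-B) e) (f' := pf1 p (-B) e)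
    ((cont_pf0 p (-B) e hp0).continuousOn)
    (fun u hu => hasDerivAt_pf0 p (-B) e hu.1) h1
  have := hanti0 ⟨ht0, ht1⟩ (right_mem_Icc.mpr zero_le_one) ht1
  rw [pf0_one] at this; exact this

lemma icc_hard (p : ℝ) (hp0 : 0 < p) (hp3 : p < 3) (e : ℝ)
    (he : e * ((p - 1) * (p - 2)) = |(p - 1) * (p - 2)|)
    {t : ℝ} (ht0 : 0 ≤ t) (ht1 : t ≤ 1) : 0 ≤ pf0 p (-(|(p - 1) * (p - 2)| / 2)) e t := by
  set b := (p - 1) * (p - 2) with hbdef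
  set B := |b| / 2 with hBdef
  have hBnn : 0 ≤ B := by positivity
  set t₀ := (3 / p) ^ (1 / (p - 3)) with ht₀def
  have h3p : (1 : ℝ) ≤ 3 / p := by rw [le_div_iff₀ hp0]; linarith
  have hexp : 1 / (p - 3) < 0 := div_neg_of_pos_of_neg one_pos (by linarith)
  have ht₀pos : 0 < t₀ := Real.rpow_pos_of_pos (by linarith) _
  have ht₀le1 : t₀ ≤ 1 := Real.rpow_le_one_of_one_le_of_nonpos h3p hexp.le
  have ht₀pow : t₀ ^ (p - 3) = 3 / p := by
    rw [ht₀def, ← Real.rpow_mul (by positivity), one_div,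
      inv_mul_cancel₀ (by intro h; rw [sub_eq_zero] at h; exact absurd h (by intro h'; linarith)),
      Real.rpow_one]
  have hpf3 : ∀ s : ℝ, pf3 p (-B) e s = p * |b| * s ^ (p - 3) - 6 * B := by
    intro s
    simp only [pf3]
    have heq : e * (p * (p - 1) * (p - 2) * s ^ (p - 3)) = p * (e * b) * s ^ (p - 3) := by
      rw [hbdef]; ring
    rw [heq, he]; ring
  have h6 : p * |b| * (3 / p) = 6 * B := by rw [hBdef]; field_simp; ring
  have h3pos : ∀ s ∈ Ioo (0 : ℝ) t₀, 0 ≤ pf3 p (-B) e s := by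
    intro s hs
    rw [hpf3]
    have h := Real.rpow_le_rpow_of_nonpos hs.1 hs.2.le (by linarith : p - 3 ≤ 0)
    rw [ht₀pow] at h
    have hm : p * |b| * (3 / p) ≤ p * |b| * s ^ (p - 3) :=
      mul_le_mul_of_nonneg_left h (by positivity)
    linarith
  have h3neg : ∀ s ∈ Ioo t₀ (1 : ℝ), pf3 p (-B) e s ≤ 0 := by
    intro s hs
    rw [hpf3]
    have h := Real.rpow_le_rpow_of_nonpos ht₀pos hs.1.le (by linarith : p - 3 ≤ 0)
    rw [ht₀pow] at h
    have hm : p * |b| * s ^ (p - 3) ≤ p * |b| * (3 / p) :=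
      mul_le_mul_of_nonneg_left h (by positivity)
    linarith
  have hpf0zero : pf0 p (-B) e 0 = 0 := by
    simp only [pf0]
    rw [Real.zero_rpow hp0.ne']
    linear_combination (-(1 : ℝ) / 2) * he + hBdef
  by_cases hS : ∃ s, s ∈ Ioc (0 : ℝ) t₀ ∧ pf2 p (-B) e s ≤ 0
  · obtain ⟨s₀, hs₀m, hs₀⟩ := hS
    set S := {s : ℝ | s ∈ Ioc (0 : ℝ) t₀ ∧ pf2 p (-B) e s ≤ 0} with hSdef
    have hne : S.Nonempty := ⟨s₀, hs₀m, hs₀⟩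
    have hbdd : BddAbove S := ⟨t₀, fun u hu => hu.1.2⟩
    set d := sSup S with hddef
    have hd0 : 0 < d := lt_of_lt_of_le hs₀m.1 (le_csSup hbdd ⟨hs₀m, hs₀⟩)
    have hdt₀ : d ≤ t₀ := csSup_le hne fun u hu => hu.1.2
    have hd1 : d ≤ 1 := le_trans hdt₀ ht₀le1
    have h2neg : ∀ s ∈ Ioo (0 : ℝ) d, pf2 p (-B) e s ≤ 0 := by
      intro s hs
      obtain ⟨u, huS, hsu⟩ := exists_lt_of_lt_csSup hne hs.2
      have hut₀ : u ≤ t₀ := huS.1.2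
      have hmono := mono_chain (f := pf2 p (-B) e) (f' := pf3 p (-B) e)
        (fun v hv => hasDerivAt_pf2 p (-B) e (lt_of_lt_of_le hs.1 hv.1))
        (fun v hv => h3pos v ⟨lt_trans hs.1 hv.1, hv.2⟩)
      have hle := hmono ⟨le_refl s, le_trans hsu.le hut₀⟩
        ⟨le_of_lt hsu, hut₀⟩ hsu.le
      linarith [huS.2]
    have h2pos : ∀ s ∈ Ioo d (1 : ℝ), 0 ≤ pf2 p (-B) e s := by
      intro s hs
      rcases le_or_gt s t₀ with hle | hlt
      · by_contra hcon
        push_neg at hcon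
        have hmem : s ∈ S := ⟨⟨lt_trans hd0 hs.1, hle⟩, hcon.le⟩
        have := le_csSup hbdd hmem
        linarith [hs.1]
      · have hanti := anti_chain (f := pf2 p (-B) e) (f' := pf3 p (-B) e)
          (fun u hu => hasDerivAt_pf2 p (-B) e (lt_of_lt_of_le ht₀pos hu.1)) h3neg
        have := hanti ⟨hlt.le, hs.2.le⟩ (right_mem_Icc.mpr ht₀le1) hs.2.le
        rw [pf2_one] at this; exact this
    have h1neg : ∀ s ∈ Ioo d (1 : ℝ), pf1 p (-B) e s ≤ 0 := by
      intro s hs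
      have hmono := mono_chain (f := pf1 p (-B) e) (f' := pf2 p (-B) e)
        (fun u hu => hasDerivAt_pf1 p (-B) e (lt_of_lt_of_le (lt_trans hd0 hs.1) hu.1))
        (fun u hu => h2pos u ⟨lt_trans hs.1 hu.1, hu.2⟩)
      have := hmono (left_mem_Icc.mpr hs.2.le) (right_mem_Icc.mpr hs.2.le) hs.2.le
      rw [pf1_one] at this; exact this
    have partA : ∀ s ∈ Icc d (1 : ℝ), 0 ≤ pf0 p (-B) e s := by
      intro s hs
      have hanti := anti_chain' (f := pf0 p (-B) e) (f' := pf1 p (-B) e)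
        ((cont_pf0 p (-B) e hp0).continuousOn)
        (fun u hu => hasDerivAt_pf0 p (-B) e (lt_trans hd0 hu.1)) h1neg
      have := hanti hs (right_mem_Icc.mpr hd1) hs.2
      rw [pf0_one] at this; exact this
    rcases le_or_gt d t with hdt | htd
    · exact partA t ⟨hdt, ht1⟩
    · have hconc : ConcaveOn ℝ (Icc (0 : ℝ) d) (pf0 p (-B) e) := by
        apply concaveOn_of_hasDerivWithinAt2_nonpos (f' := pf1 p (-B) e) (f'' := pf2 p (-B) e)
          (convex_Icc 0 d) ((cont_pf0 p (-B) e hp0).continuousOn)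
        · intro u hu; rw [interior_Icc] at hu
          exact (hasDerivAt_pf0 p (-B) e hu.1).hasDerivWithinAt
        · intro u hu; rw [interior_Icc] at hu
          exact (hasDerivAt_pf1 p (-B) e hu.1).hasDerivWithinAt
        · intro u hu; rw [interior_Icc] at hu; exact h2neg u hu
      have hseg : t ∈ segment ℝ (0 : ℝ) d := by
        rw [segment_eq_Icc hd0.le]; exact ⟨ht0, htd.le⟩
      have hmin := hconc.ge_on_segment (left_mem_Icc.mpr hd0.le)
        (right_mem_Icc.mpr hd0.le) hseg
      rw [hpf0zero] at hmin
      have hd_in : 0 ≤ pf0 p (-B) e d := partA d ⟨le_refl d, hd1⟩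
      have := le_min (le_refl (0:ℝ)) hd_in
      linarith [hmin, this]
  · have h2 : ∀ s ∈ Ioo (0 : ℝ) 1, 0 ≤ pf2 p (-B) e s := by
      intro s hs
      rcases le_or_gt s t₀ with hle | hlt
      · by_contra hcon
        exact hS ⟨s, ⟨hs.1, hle⟩, (not_le.mp hcon).le⟩
      · have hanti := anti_chain (f := pf2 p (-B) e) (f' := pf3 p (-B) e)
          (fun u hu => hasDerivAt_pf2 p (-B) e (lt_of_lt_of_le ht₀pos hu.1)) h3neg
        have := hanti ⟨hlt.le, hs.2.le⟩ (right_mem_Icc.mpr ht₀le1) hs.2.le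
        rw [pf2_one] at this; exact this
    have h1 : ∀ s ∈ Ioo (0 : ℝ) 1, pf1 p (-B) e s ≤ 0 := by
      intro s hs
      have hmono := mono_chain (f := pf1 p (-B) e) (f' := pf2 p (-B) e)
        (fun u hu => hasDerivAt_pf1 p (-B) e (lt_of_lt_of_le hs.1 hu.1))
        (fun u hu => h2 u ⟨lt_trans hs.1 hu.1, hu.2⟩)
      have := hmono (left_mem_Icc.mpr hs.2.le) (right_mem_Icc.mpr hs.2.le) hs.2.le
      rw [pf1_one] at this; exact this
    have hanti0 := anti_chain' (f := pf0 p (-B) e) (f' := pf1 p (-B) e)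
      ((cont_pf0 p (-B) e hp0).continuousOn)
      (fun u hu => hasDerivAt_pf0 p (-B) e hu.1) h1
    have := hanti0 ⟨ht0, ht1⟩ (right_mem_Icc.mpr zero_le_one) ht1
    rw [pf0_one] at this; exact this

lemma onevar (p : ℝ) (hp0 : 0 < p) (hp3 : p < 3) {t : ℝ} (ht : 0 ≤ t) :
    |t ^ p - 1 - p * (t - 1) - p * (p - 1) / 2 * (t - 1) ^ 2|
      ≤ |(p - 1) * (p - 2)| / 2 * |t - 1| ^ 3 := by
  set b := (p - 1) * (p - 2) with hbdef
  rcases le_or_gt 1 t with h1 | h1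
  · have hpos := ici_bound p hp0 hp3 1 (Or.inl rfl) h1
    have hneg := ici_bound p hp0 hp3 (-1) (Or.inr rfl) h1
    simp only [pf0] at hpos hneg
    rw [abs_of_nonneg (by linarith : (0 : ℝ) ≤ t - 1), abs_le]
    constructor <;> nlinarith [hpos, hneg]
  · set e : ℝ := if 0 ≤ b then 1 else -1 with hedef
    have he1 : e = 1 ∨ e = -1 := by rw [hedef]; split <;> simp
    have heb : e * b = |b| := by
      rw [hedef]; split
      · rw [one_mul, abs_of_nonneg ‹_›]
      · rw [abs_of_neg (lt_of_not_ge ‹_›)]; ring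
    have hneb : (-e) * b = -|b| := by rw [neg_mul, heb]
    have hard := icc_hard p hp0 hp3 e heb ht h1.le
    have easy := icc_easy p hp0 (-e) hneb ht h1.le
    simp only [pf0] at hard easy
    rw [show |t - 1| = 1 - t by rw [abs_of_nonpos (by linarith)]; ring, abs_le]
    rcases he1 with h | h <;> rw [h] at hard easy <;>
      constructor <;> nlinarith [hard, easy]

theorem stmt19 (a lam : ℝ) (ha : 0 < a) (hlam1 : -1 < lam) (hlam2 : lam < 2) (hlam0 : lam ≠ 0)
    (x : ℝ) (hx : 0 ≤ x) :
    |x ^ (lam + 1) / a ^ lam - a - (lam + 1) * (x - a)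
        - (lam * (lam + 1) / (2 * a)) * (x - a) ^ 2|
      ≤ (|(lam - 1) * lam| / 2) * |x - a| ^ 3 / a ^ 2 := by
  have hp0 : 0 < lam + 1 := by linarith
  have hp3 : lam + 1 < 3 := by linarith
  have hta : 0 ≤ x / a := div_nonneg hx ha.le
  have key := onevar (lam + 1) hp0 hp3 hta
  rw [Real.div_rpow hx ha.le] at key
  have h1 : x / a - 1 = (x - a) / a := by field_simp
  rw [h1, abs_div, abs_of_pos ha] at key
  have hb : (lam + 1 - 1) * (lam + 1 - 2) = (lam - 1) * lam := by ring
  rw [hb] at key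
  have hap : a ^ (lam + 1) = a ^ lam * a := by
    rw [Real.rpow_add ha, Real.rpow_one]
  rw [hap] at key
  have halam : 0 < a ^ lam := Real.rpow_pos_of_pos ha _
  have hgoalLHS : x ^ (lam + 1) / a ^ lam - a - (lam + 1) * (x - a)
      - lam * (lam + 1) / (2 * a) * (x - a) ^ 2
      = a * (x ^ (lam + 1) / (a ^ lam * a) - 1 - (lam + 1) * ((x - a) / a)
        - (lam + 1) * (lam + 1 - 1) / 2 * ((x - a) / a) ^ 2) := by
    field_simp
    ring
  have hgoalRHS : |(lam - 1) * lam| / 2 * |x - a| ^ 3 / a ^ 2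
      = a * (|(lam - 1) * lam| / 2 * (|x - a| / a) ^ 3) := by
    field_simp
  rw [hgoalLHS, hgoalRHS, abs_mul, abs_of_pos ha]
  exact mul_le_mul_of_nonneg_left key ha.le
end
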